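/- arXiv:1309.4662 — 4 statements merged into one kernel-verified Lean document; each statement's English description precedes it below -/
import Mathlib

section
/- Let G be a finite simple graph with at least 3 edges and let C be an Eulerian circuit of G. Then the sequence of edges traversed by C, taken in order, is the vertex sequence of a Hamiltonian cycle of the line graph L(G). -/
open SimpleGraph Walk in
private lemma start_mem_of_head? {V : Type*} {G : SimpleGraph V} {a b : V}
    (p : G.Walk a b) {e : Sym2 V} (he : p.edges.head? = some e) : a ∈ e := by
  cases p with
  | nil => simp at he
  | cons h q =>
    rw [edges_cons, List.head?_cons, Option.some_inj] at he
    subst he; simp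

open SimpleGraph Walk in
private lemma end_mem_of_getLast? {V : Type*} {G : SimpleGraph V} :
    ∀ {a b : V} (p : G.Walk a b) {e : Sym2 V}, p.edges.getLast? = some e → b ∈ e := by
  intro a b p
  induction p with
  | nil => simp
  | @cons a c b h q ih =>
    intro e he
    rw [edges_cons] at he
    rcases hq : q.edges with _ | ⟨x, xs⟩
    · rw [hq] at he
      simp only [List.getLast?_singleton, Option.some_inj] at he
      have h0 : q.length = 0 := by rw [← Walk.length_edges, hq]; rfl
      have hcb : c = b := Walk.eq_of_length_eq_zero h0
      subst he; subst hcb; simp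
    · rw [hq, List.getLast?_cons_cons, ← hq] at he
      exact ih he

open SimpleGraph Walk in
private lemma not_mem_edges_of_isPath {V : Type*} {G : SimpleGraph V} {a b : V}
    {p : G.Walk a b} (hp : p.IsPath) (hl : 2 ≤ p.length) : s(a, b) ∉ p.edges := by
  intro hmem
  cases p with
  | nil => simp at hl
  | @cons a c b h q =>
    rw [cons_isPath_iff] at hp
    rw [edges_cons, List.mem_cons] at hmem
    rcases hmem with hmem | hmem
    · have hbc : b = c := Sym2.congr_right.mp hmem
      subst hbc
      cases q with
      | nil => simp at hl
      | cons h' r =>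
        rw [cons_isPath_iff] at hp
        exact hp.1.2 r.end_mem_support
    · exact hp.2 (Walk.fst_mem_support_of_mem_edges q hmem)

open SimpleGraph Walk in
private lemma exists_lineWalk {V : Type*} {G : SimpleGraph V} :
    ∀ {a b : V} (W : G.Walk a b), W.edges.Nodup → ∀ (e f : G.edgeSet),
      W.edges.head? = some ↑e → W.edges.getLast? = some ↑f →
      ∃ H : (SimpleGraph.lineGraph G).Walk e f, H.support.map Subtype.val = W.edges := by
  intro a b W
  induction W with
  | nil => intro _ e f he hf; simp at he
  | @cons a c b h q ih =>
    intro hnd e f he hf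
    rw [edges_cons] at he hf ⊢
    rw [edges_cons] at hnd
    rw [List.head?_cons, Option.some_inj] at he
    cases q with
    | nil =>
      simp only [edges_nil, List.getLast?_singleton, Option.some_inj] at hf
      have hef : e = f := Subtype.ext (by rw [← he, ← hf])
      subst hef
      exact ⟨Walk.nil, by simp [he]⟩
    | @cons c d b h' r =>
      have hd : s(c, d) ∈ G.edgeSet := h'
      set e' : G.edgeSet := ⟨s(c, d), hd⟩ with he'
      have hhead : (Walk.cons h' r).edges.head? = some ↑e' := by
        rw [edges_cons, List.head?_cons]
      have hlast : (Walk.cons h' r).edges.getLast? = some ↑f := by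
        rw [edges_cons] at hf ⊢
        rw [List.getLast?_cons_cons] at hf
        exact hf
      obtain ⟨H', hH'⟩ := ih (List.Nodup.of_cons hnd) e' f hhead hlast
      have hmem : s(c, d) ∈ (Walk.cons h' r).edges := by
        rw [edges_cons]; exact List.mem_cons_self
      have hne : e ≠ e' := by
        intro hh
        apply (List.nodup_cons.mp hnd).1
        rw [he, hh]
        exact hmem
      have hadj : (SimpleGraph.lineGraph G).Adj e e' := by
        rw [lineGraph_adj_iff_exists]
        exact ⟨hne, c, by rw [← he]; simp, by exact Sym2.mem_mk_left _ _⟩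
      exact ⟨Walk.cons hadj H', by rw [support_cons, List.map_cons, hH', ← he]⟩

open Classical in
/-- If `G` is a finite simple graph with at least `3` edges and `C` is an Eulerian
circuit of `G`, then the edges of `C`, taken in order (returning to the first edge),
form the vertex sequence of a Hamiltonian cycle of the line graph of `G`. -/
theorem eulerian_gives_hamiltonian_lineGraph {V : Type*} [Fintype V] (G : SimpleGraph V)
    (hE : 3 ≤ Nat.card G.edgeSet) {u : V} (C : G.Walk u u) (hC : C.IsEulerian) :
    ∃ (e₀ : G.edgeSet) (H : (SimpleGraph.lineGraph G).Walk e₀ e₀),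
      H.IsHamiltonianCycle ∧ H.support.map Subtype.val = C.edges ++ [(e₀ : Sym2 V)] := by
  classical
  have hnd : C.edges.Nodup := hC.isTrail.edges_nodup
  have hlen : 3 ≤ C.edges.length := by
    have h1 : G.edgeFinset ⊆ C.edges.toFinset := by
      intro e he
      rw [List.mem_toFinset]
      exact hC.mem_edges_iff.mpr (SimpleGraph.mem_edgeFinset.mp he)
    calc 3 ≤ Nat.card G.edgeSet := hE
      _ = G.edgeFinset.card := by
          rw [Nat.card_eq_fintype_card, SimpleGraph.edgeFinset_card]
      _ ≤ C.edges.toFinset.card := Finset.card_le_card h1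
      _ ≤ C.edges.length := C.edges.toFinset_card_le
  have hne : C.edges ≠ [] := by
    intro h; rw [h] at hlen; simp at hlen
  obtain ⟨x, y, M, hL⟩ : ∃ x y M, C.edges = x :: y :: M := by
    rcases hl : C.edges with _ | ⟨x, _ | ⟨y, M⟩⟩
    · rw [hl] at hlen; simp at hlen
    · rw [hl] at hlen; simp at hlen
    · exact ⟨x, y, M, rfl⟩
  refine ⟨⟨C.edges.head hne, C.edges_subset_edgeSet (List.head_mem hne)⟩, ?_⟩
  set e₀ : G.edgeSet := ⟨C.edges.head hne, C.edges_subset_edgeSet (List.head_mem hne)⟩ with he₀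
  set f : G.edgeSet := ⟨C.edges.getLast hne, C.edges_subset_edgeSet (List.getLast_mem hne)⟩
    with hfdef
  have he : C.edges.head? = some ↑e₀ := List.head?_eq_head hne
  have hf : C.edges.getLast? = some ↑f := List.getLast?_eq_getLast hne
  have he₀x : (↑e₀ : Sym2 V) = x := by
    rw [hL] at he; rw [List.head?_cons, Option.some_inj] at he; exact he.symm
  have hfmem : (↑f : Sym2 V) ∈ y :: M := by
    rw [hL, List.getLast?_cons_cons] at hf
    exact List.mem_of_getLast? hf
  have hxnotmem : x ∉ y :: M := by
    rw [hL] at hnd; exact (List.nodup_cons.mp hnd).1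
  have hfe : f ≠ e₀ := by
    intro hh
    apply hxnotmem
    rw [← he₀x, ← hh]
    exact hfmem
  have hu0 : u ∈ (↑e₀ : Sym2 V) := start_mem_of_head? C he
  have huf : u ∈ (↑f : Sym2 V) := end_mem_of_getLast? C hf
  obtain ⟨H0, hsup⟩ := exists_lineWalk C hnd e₀ f he hf
  have hpath : H0.IsPath := by
    rw [SimpleGraph.Walk.isPath_def]
    have : (H0.support.map Subtype.val).Nodup := by rw [hsup]; exact hnd
    exact this.of_map _
  have hlen0 : 2 ≤ H0.length := by
    have h1 : H0.support.length = C.edges.length := by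
      rw [← hsup, List.length_map]
    have h2 := SimpleGraph.Walk.length_support H0
    omega
  have hnotmem : s(e₀, f) ∉ H0.edges := not_mem_edges_of_isPath hpath hlen0
  have hadj : (SimpleGraph.lineGraph G).Adj f e₀ := by
    rw [SimpleGraph.lineGraph_adj_iff_exists]
    exact ⟨hfe, u, huf, hu0⟩
  have hsupH : (H0.concat hadj).support = H0.support ++ [e₀] := by
    rw [SimpleGraph.Walk.support_concat]
  have key : (H0.concat hadj).support.map Subtype.val = C.edges ++ [(↑e₀ : Sym2 V)] := by
    rw [hsupH, List.map_append, hsup]; rfl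
  refine ⟨H0.concat hadj, ?_, key⟩
  have hcycle : (H0.concat hadj).IsCycle := by
    rw [SimpleGraph.Walk.isCycle_def]
    refine ⟨⟨?_⟩, SimpleGraph.Walk.concat_ne_nil _ _, ?_⟩
    · rw [SimpleGraph.Walk.edges_concat, List.concat_eq_append]
      rw [List.nodup_append]
      refine ⟨hpath.isTrail.edges_nodup, List.nodup_singleton _, ?_⟩
      intro e hee
      simp only [List.mem_singleton]
      intro h1
      intro h2 h3; subst h2 h3
      apply hnotmem
      rwa [Sym2.eq_swap] at hee
    · rw [hsupH, List.tail_append_of_ne_nil (SimpleGraph.Walk.support_ne_nil _)]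
      rw [List.nodup_append]
      have hsnd : H0.support = e₀ :: H0.support.tail := H0.support_eq_cons
      have hnodup : H0.support.Nodup := hpath.support_nodup
      refine ⟨hnodup.tail, List.nodup_singleton _, ?_⟩
      intro v hv
      simp only [List.mem_singleton]
      intro h1
      intro h2 h3; subst h2 h3
      rw [hsnd, List.nodup_cons] at hnodup
      exact hnodup.1 hv
  rw [SimpleGraph.Walk.isHamiltonianCycle_isCycle_and_isHamiltonian_tail]
  refine ⟨hcycle, ?_⟩
  intro ed
  rw [SimpleGraph.Walk.support_tail_of_not_nil _ hcycle.not_nil]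
  have hcount : ((H0.concat hadj).support.tail.map Subtype.val).count (↑ed : Sym2 V)
      = (H0.concat hadj).support.tail.count ed := by
    exact List.count_map_of_injective _ _ Subtype.val_injective _
  suffices hs : ((H0.concat hadj).support.tail.map Subtype.val).count (↑ed : Sym2 V) = 1 by
    rw [hcount] at hs; convert hs
  have htail : (H0.concat hadj).support.tail.map Subtype.val
      = C.edges.tail ++ [(↑e₀ : Sym2 V)] := by
    rw [← List.tail_append_of_ne_nil hne, ← key]
    exact List.map_tail
  rw [htail, hL, List.tail_cons, List.count_append, he₀x]
  have hedcount : (C.edges).count (↑ed : Sym2 V) = 1 := hC ↑ed ed.2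
  rw [hL] at hedcount
  by_cases hcase : (↑ed : Sym2 V) = x
  · have h0 : (y :: M).count (↑ed : Sym2 V) = 0 := by
      rw [List.count_eq_zero, hcase]; exact hxnotmem
    have h2 : ([x] : List (Sym2 V)).count (↑ed : Sym2 V) = 1 := by
      rw [hcase]; simp
    rw [h0, h2]
  · have h1 : (y :: M).count (↑ed : Sym2 V) = 1 := by
      rwa [List.count_cons_of_ne (Ne.symm hcase)] at hedcount
    have h2 : ([x] : List (Sym2 V)).count (↑ed : Sym2 V) = 0 := by
      rw [List.count_eq_zero]; simp [hcase]
    rw [h1, h2]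
end

section
/- Let G be a finite connected simple graph with at least 3 edges, let D be a set of vertices of G such that every vertex in D has degree 2, every edge of G has at least one endpoint in D, and every vertex in D has exactly one neighbor in D, and let w assign a rational number to every unordered pair of distinct adjacent edges of G (turning costs). Give the line graph L(G) edge weights by assigning weight w({e,f}) to the edge of L(G) joining adjacent edges e and f of G. Then for every rational number q, G has an Eulerian circuit of turning cost at most q if and only if L(G) has a Hamiltonian cycle of total weight at most q. -/
open SimpleGraph List

namespace EulerHamAux

variable {α : Type*}

lemma mem_attachWith {l : List α} {P : α → Prop} {H : ∀ x ∈ l, P x} (x : {y // P y}) :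
    x ∈ l.attachWith P H ↔ x.1 ∈ l := by
  obtain ⟨x, hx⟩ := x
  simp [List.attachWith, List.mem_pmap]

lemma getLast?_cons_of_ne_nil {l : List α} (a : α) (h : l ≠ []) :
    (a :: l).getLast? = l.getLast? := by
  rcases l with _ | ⟨b, t⟩
  · exact absurd rfl h
  · exact List.getLast?_cons_cons

lemma mem_of_getLast?' {l : List α} {a : α} (h : l.getLast? = some a) : a ∈ l := by
  obtain ⟨hne, rfl⟩ := List.mem_getLast?_eq_getLast (by rw [h]; rfl)
  exact List.getLast_mem hne

/-- second-to-last element of `a :: b :: l` -/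
def penult : α → α → List α → α
  | a, _, [] => a
  | _, b, c :: l => penult b c l

lemma penult_mem : ∀ (l : List α) (a b : α), l ≠ [] → penult a b l ∈ b :: l
  | [], _, _, h => absurd rfl h
  | [c], a, b, _ => by simp [penult]
  | c :: d :: l, a, b, _ => by
      have := penult_mem (d :: l) b c (by simp)
      simp [penult] at this ⊢
      tauto

/-- ternary chain predicate: `R` holds on all consecutive triples of `a :: b :: l`. -/
def Tern (R : α → α → α → Prop) : α → α → List α → Prop
  | _, _, [] => True
  | a, b, c :: l => R a b c ∧ Tern R b c l

lemma tern_ne : ∀ (l : List α) (a b N : α), (a :: b :: l).Nodup → penult a b l ≠ N →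
    Tern (fun x _ y => x ≠ y) a b (l ++ [N])
  | [], a, b, N, _, hp => by
      refine ⟨?_, trivial⟩
      simpa [penult] using hp
  | c :: l, a, b, N, hnd, hp => by
      refine ⟨?_, tern_ne l b c N hnd.of_cons (by simpa [penult] using hp)⟩
      have h := hnd
      simp only [List.nodup_cons, List.mem_cons] at h
      tauto

lemma chain_pairs : ∀ (l : List α) (a : α), List.Chain (fun x y => (x, y) ∈ (a :: l).zip l) a l
  | [], _ => List.Chain.nil
  | b :: l, a => by
      refine List.Chain.cons (by simp) ?_
      exact List.IsChain.imp (fun x y h => by simp [List.zip_cons_cons]; tauto) (chain_pairs l b)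

lemma chain_getLast : ∀ (l : List α) (a b : α) {R : α → α → Prop},
    List.Chain R a (l ++ [b]) → R ((a :: l).getLast (by simp)) b
  | [], a, b, R, h => by simpa using (List.chain_cons.1 h).1
  | c :: l, a, b, R, h => by
      have := chain_getLast l c b (List.chain_cons.1 h).2
      simpa [List.getLast_cons] using this

lemma chain'_and {R S : α → α → Prop} : ∀ {l : List α}, List.IsChain R l → List.IsChain S l →
    List.IsChain (fun a b => R a b ∧ S a b) l
  | [], _, _ => List.IsChain.nil
  | [_], _, _ => List.isChain_singleton _
  | a :: b :: l, hr, hs => by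
      rw [List.isChain_cons_cons] at *
      exact ⟨⟨hr.1, hs.1⟩, chain'_and hr.2 hs.2⟩

end EulerHamAux
open SimpleGraph List

namespace EulerHamAux

variable {W : Type*} {G : SimpleGraph W}

lemma edges_eq_zip {u v : W} : ∀ (p : G.Walk u v),
    p.edges = (p.support.zip p.support.tail).map (fun q => s(q.1, q.2))
  | SimpleGraph.Walk.nil => by simp
  | SimpleGraph.Walk.cons h q => by
      obtain ⟨t, ht⟩ : ∃ t, q.support = _ :: t := ⟨_, q.support_eq_cons⟩
      rw [SimpleGraph.Walk.edges_cons, SimpleGraph.Walk.support_cons, edges_eq_zip q, ht]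
      simp [List.zip_cons_cons]

lemma exists_walk_of_chain : ∀ (l : List W) (a b : W), List.Chain G.Adj a (l ++ [b]) →
    ∃ p : G.Walk a b, p.support = a :: (l ++ [b]) ∧
      p.edges = ((a :: l).zip (l ++ [b])).map (fun q => s(q.1, q.2))
  | [], a, b, h => by
      obtain ⟨hab, -⟩ := List.chain_cons.1 h
      exact ⟨SimpleGraph.Walk.cons hab SimpleGraph.Walk.nil, by simp, by simp⟩
  | c :: l, a, b, h => by
      obtain ⟨hac, h2⟩ := List.chain_cons.1 h
      obtain ⟨p, hs, he⟩ := exists_walk_of_chain l c b h2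
      exact ⟨SimpleGraph.Walk.cons hac p, by simp [hs], by simp [he, List.zip_cons_cons]⟩

lemma path_no_chord {x y : W} : ∀ (q : G.Walk x y), q.IsPath → 2 ≤ q.length →
    s(x, y) ∉ q.edges
  | SimpleGraph.Walk.nil, _, hl => by simp at hl
  | SimpleGraph.Walk.cons h q, hp, hl => by
      rw [SimpleGraph.Walk.cons_isPath_iff] at hp
      intro hmem
      rw [SimpleGraph.Walk.edges_cons, List.mem_cons] at hmem
      rcases hmem with heq | hmem
      · rw [Sym2.congr_right] at heq
        subst heq
        have : q = SimpleGraph.Walk.nil := (SimpleGraph.Walk.isPath_iff_eq_nil (p := q)).1 hp.1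
        subst this
        simp at hl
      · exact hp.2 (q.fst_mem_support_of_mem_edges hmem)

lemma mem_edge_of_mem_support {u v : W} : ∀ (p : G.Walk u v) (x : W), x ∈ p.support →
    x = v ∨ ∃ e ∈ p.edges, x ∈ e
  | SimpleGraph.Walk.nil, x, hx => by left; simpa using hx
  | SimpleGraph.Walk.cons h q, x, hx => by
      rw [SimpleGraph.Walk.support_cons, List.mem_cons] at hx
      rcases hx with rfl | hx
      · right
        rw [SimpleGraph.Walk.edges_cons]
        exact ⟨_, List.mem_cons_self, Sym2.mem_mk_left _ _⟩
      · rcases mem_edge_of_mem_support q x hx with h' | ⟨e, he, hxe⟩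
        · exact Or.inl h'
        · refine Or.inr ⟨e, ?_, hxe⟩
          rw [SimpleGraph.Walk.edges_cons]
          exact List.mem_cons_of_mem _ he

lemma head?_edges_mem : ∀ {u v : W} (p : G.Walk u v), p.edges ≠ [] →
    ∃ e, p.edges.head? = some e ∧ u ∈ e
  | _, _, SimpleGraph.Walk.nil, hne => absurd rfl hne
  | _, _, SimpleGraph.Walk.cons h q, _ =>
      ⟨_, by rw [SimpleGraph.Walk.edges_cons, List.head?_cons], Sym2.mem_mk_left _ _⟩

lemma getLast?_edges_mem : ∀ {u v : W} (p : G.Walk u v), p.edges ≠ [] →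
    ∃ e, p.edges.getLast? = some e ∧ v ∈ e
  | _, _, SimpleGraph.Walk.nil, hne => absurd rfl hne
  | u, v, SimpleGraph.Walk.cons h SimpleGraph.Walk.nil, _ =>
      ⟨s(u, v), rfl, Sym2.mem_mk_right _ _⟩
  | _, _, SimpleGraph.Walk.cons h (SimpleGraph.Walk.cons h' q), _ => by
      obtain ⟨e, he1, he2⟩ := getLast?_edges_mem (SimpleGraph.Walk.cons h' q) (by simp)
      refine ⟨e, ?_, he2⟩
      rw [SimpleGraph.Walk.edges_cons] at he1 ⊢
      rw [SimpleGraph.Walk.edges_cons, List.getLast?_cons_cons]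
      exact he1

lemma shared_unique {A B : G.edgeSet} (hne : A ≠ B) {x y : W}
    (hxA : x ∈ A.1) (hxB : x ∈ B.1) (hyA : y ∈ A.1) (hyB : y ∈ B.1) : x = y := by
  by_contra hxy
  have hA : A.1 = s(x, y) := (Sym2.mem_and_mem_iff hxy).1 ⟨hxA, hyA⟩
  have hB : B.1 = s(x, y) := (Sym2.mem_and_mem_iff hxy).1 ⟨hxB, hyB⟩
  exact hne (Subtype.ext (hA.trans hB.symm))

lemma sum_countP [Fintype W] [DecidableEq W] (pred : W → Sym2 W → Bool)
    (hpred : ∀ x s, pred x s = true ↔ x ∈ s) :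
    ∀ (l : List (Sym2 W)), (∀ e ∈ l, ¬ e.IsDiag) →
      ∑ x : W, l.countP (pred x) = 2 * l.length
  | [], _ => by simp
  | e :: l, hd => by
      have IH := sum_countP pred hpred l (fun e he => hd e (by simp [he]))
      simp only [List.countP_cons]
      rw [Finset.sum_add_distrib, IH]
      have h2 : ∑ x : W, (if pred x e = true then 1 else 0) = 2 := by
        induction e using Sym2.ind with
        | _ a b =>
          have hab : a ≠ b := by
            have := hd s(a,b) List.mem_cons_self
            simpa [Sym2.isDiag_iff_proj_eq] using this
          have hfil : Finset.univ.filter (fun x => pred x s(a, b) = true) = {a, b} := by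
            ext x
            simp [hpred, Sym2.mem_iff]
          rw [Finset.sum_boole, hfil]
          rw [Finset.card_pair hab]
          norm_num
      rw [h2]
      simp only [List.length_cons]
      omega

lemma exists_two (l : List (Sym2 W)) (hnd : l.Nodup) (X : W) (pred : Sym2 W → Bool)
    (hpred : ∀ s, pred s = true ↔ X ∈ s) (h2 : l.countP pred = 2) :
    ∃ A B : W, A ≠ B ∧ s(X, A) ∈ l ∧ s(X, B) ∈ l ∧
      ∀ Y, s(X, Y) ∈ l → Y = A ∨ Y = B := by
  have hlen : (l.filter pred).length = 2 := by rw [← List.countP_eq_length_filter]; exact h2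
  obtain ⟨a, b, hab⟩ := List.length_eq_two.1 hlen
  have hndf : (l.filter pred).Nodup := hnd.filter pred
  rw [hab] at hndf
  have haneb : a ≠ b := by simpa using hndf
  have hal : a ∈ l ∧ pred a = true := by
    have : a ∈ l.filter pred := by rw [hab]; simp
    exact ⟨List.mem_of_mem_filter this, List.of_mem_filter this⟩
  have hbl : b ∈ l ∧ pred b = true := by
    have : b ∈ l.filter pred := by rw [hab]; simp
    exact ⟨List.mem_of_mem_filter this, List.of_mem_filter this⟩
  obtain ⟨A, hA⟩ := Sym2.mem_iff_exists.1 ((hpred a).1 hal.2)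
  obtain ⟨B, hB⟩ := Sym2.mem_iff_exists.1 ((hpred b).1 hbl.2)
  refine ⟨A, B, ?_, by rw [← hA]; exact hal.1, by rw [← hB]; exact hbl.1, ?_⟩
  · rintro rfl
    exact haneb (by rw [hA, hB])
  · intro Y hY
    have : s(X, Y) ∈ l.filter pred := List.mem_filter.2 ⟨hY, (hpred _).2 (by simp)⟩
    rw [hab, List.mem_cons, List.mem_cons] at this
    rcases this with h | h | h
    · left; rw [hA] at h; exact Sym2.congr_right.1 h
    · right; rw [hB] at h; exact Sym2.congr_right.1 h
    · simp at h

end EulerHamAux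
open SimpleGraph List

namespace EulerHamAux

variable {V : Type*} {G : SimpleGraph V}

lemma no_bounce (D : Set V)
    (hD2 : ∀ v ∈ D, ∀ x y z, G.Adj v x → G.Adj v y → G.Adj v z → x ≠ y → z = x ∨ z = y)
    (h2 : ∀ e ∈ G.edgeSet, ∃ v ∈ D, v ∈ e)
    (h3 : ∀ v ∈ D, ∃! x, x ∈ D ∧ G.Adj v x)
    (M : List (Sym2 G.edgeSet))
    (hM : ∀ e ∈ M, e ∈ (SimpleGraph.lineGraph G).edgeSet)
    (htwo : ∀ X : G.edgeSet, ∃ A B, A ≠ B ∧ s(X, A) ∈ M ∧ s(X, B) ∈ M ∧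
      ∀ Y, s(X, Y) ∈ M → Y = A ∨ Y = B) :
    ∀ (E F F' : G.edgeSet) (u : V), s(E, F) ∈ M → s(F, F') ∈ M → E ≠ F' →
      u ∈ E.1 → u ∈ F.1 → u ∈ F'.1 → False := by
  intro E F F' u hEF hFF' hEF' huE huF huF'
  have hAdjEF : (SimpleGraph.lineGraph G).Adj E F :=
    (SimpleGraph.lineGraph G).mem_edgeSet.1 (hM _ hEF)
  have hAdjFF' : (SimpleGraph.lineGraph G).Adj F F' :=
    (SimpleGraph.lineGraph G).mem_edgeSet.1 (hM _ hFF')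
  have hEFne : E ≠ F := hAdjEF.ne
  have hFF'ne : F ≠ F' := hAdjFF'.ne
  obtain ⟨a, hEa⟩ := Sym2.mem_iff_exists.1 huE
  obtain ⟨b, hFb⟩ := Sym2.mem_iff_exists.1 huF
  obtain ⟨c, hF'c⟩ := Sym2.mem_iff_exists.1 huF'
  have hadja : G.Adj u a := G.mem_edgeSet.1 (hEa ▸ E.2)
  have hadjb : G.Adj u b := G.mem_edgeSet.1 (hFb ▸ F.2)
  have hadjc : G.Adj u c := G.mem_edgeSet.1 (hF'c ▸ F'.2)
  have hab : a ≠ b := fun h => hEFne (Subtype.ext (by rw [hEa, hFb, h]))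
  have hbc : b ≠ c := fun h => hFF'ne (Subtype.ext (by rw [hFb, hF'c, h]))
  have hac : a ≠ c := fun h => hEF' (Subtype.ext (by rw [hEa, hF'c, h]))
  have huD : u ∉ D := by
    intro huD
    rcases hD2 u huD a b c hadja hadjb hadjc hab with h | h
    · exact hac h.symm
    · exact hbc h.symm
  have hbD : b ∈ D := by
    obtain ⟨d, hdD, hd⟩ := h2 F.1 F.2
    rw [hFb, Sym2.mem_iff] at hd
    rcases hd with rfl | rfl
    · exact absurd hdD huD
    · exact hdD
  obtain ⟨x, ⟨hxD, hbx⟩, -⟩ := h3 b hbD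
  have hxu : x ≠ u := fun h => huD (h ▸ hxD)
  have hub : u ≠ b := fun h => huD (h ▸ hbD)
  set F'' : G.edgeSet := ⟨s(b, x), G.mem_edgeSet.2 hbx⟩ with hF''
  have huF'' : u ∉ F''.1 := by
    simp only [hF'', Sym2.mem_iff]
    push_neg
    exact ⟨hub, fun h => hxu h.symm⟩
  obtain ⟨A, B, hABne, hA, hB, hall⟩ := htwo F''
  have key : ∀ Y, s(F'', Y) ∈ M →
      Y = F ∨ (∃ t, Y.1 = s(x, t) ∧ G.Adj x t ∧ t ≠ b) := by
    intro Y hY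
    have hAdj : (SimpleGraph.lineGraph G).Adj F'' Y :=
      (SimpleGraph.lineGraph G).mem_edgeSet.1 (hM _ hY)
    obtain ⟨hne, z, hzF'', hzY⟩ := SimpleGraph.lineGraph_adj_iff_exists.1 hAdj
    have hz : z = b ∨ z = x := by
      have : z ∈ s(b, x) := hzF''
      rwa [Sym2.mem_iff] at this
    rcases hz with rfl | rfl
    · -- shares at b
      obtain ⟨t, hYt⟩ := Sym2.mem_iff_exists.1 hzY
      have hadjt : G.Adj z t := G.mem_edgeSet.1 (hYt ▸ Y.2)
      rcases hD2 z hbD u x t hadjb.symm hbx hadjt (fun h => hxu h.symm) with rfl | rfl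
      · left
        apply Subtype.ext
        rw [hYt, hFb, Sym2.eq_swap]
      · exact absurd (Subtype.ext (by rw [hYt]) : Y = F'') (fun h => hne h.symm)
    · -- shares at x
      obtain ⟨t, hYt⟩ := Sym2.mem_iff_exists.1 hzY
      have hadjt : G.Adj z t := G.mem_edgeSet.1 (hYt ▸ Y.2)
      by_cases htb : t = b
      · subst htb
        exact absurd (Subtype.ext (by rw [hYt, Sym2.eq_swap]) : Y = F'')
          (fun h => hne h.symm)
      · exact Or.inr ⟨t, hYt, hadjt, htb⟩
  have hFmem : s(F'', F) ∈ M := by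
    by_contra hFAB
    have hFA : F ≠ A := fun h => hFAB (h ▸ hA)
    have hFB : F ≠ B := fun h => hFAB (h ▸ hB)
    rcases key A hA with h | ⟨t₁, ht₁, hadjt₁, ht₁b⟩
    · exact hFA h.symm
    rcases key B hB with h | ⟨t₂, ht₂, hadjt₂, ht₂b⟩
    · exact hFB h.symm
    have ht12 : t₁ ≠ t₂ := fun h => hABne (Subtype.ext (by rw [ht₁, ht₂, h]))
    rcases hD2 x hxD b t₁ t₂ hbx.symm hadjt₁ hadjt₂ (fun h => ht₁b h.symm) with h | h
    · exact ht₂b h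
    · exact ht12 h.symm
  obtain ⟨A', B', hne', hA', hB', hall'⟩ := htwo F
  have hE' : E = A' ∨ E = B' := hall' E (by rwa [Sym2.eq_swap])
  have hF'2 : F' = A' ∨ F' = B' := hall' F' hFF'
  have hF''2 : F'' = A' ∨ F'' = B' := hall' F'' (by rwa [Sym2.eq_swap])
  have : F'' = E ∨ F'' = F' := by
    rcases hE' with rfl | rfl
    · rcases hF''2 with h' | h'
      · exact Or.inl h'
      · rcases hF'2 with h2' | h2'
        · exact absurd h2'.symm hEF'
        · exact Or.inr (h'.trans h2'.symm)
    · rcases hF''2 with h' | h'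
      · rcases hF'2 with h2' | h2'
        · exact Or.inr (h'.trans h2'.symm)
        · exact absurd h2'.symm hEF'
      · exact Or.inl h'
  rcases this with rfl | rfl
  · exact huF'' huE
  · exact huF'' huF'

lemma build (M : List (Sym2 G.edgeSet))
    (hM : ∀ e ∈ M, e ∈ (SimpleGraph.lineGraph G).edgeSet)
    (NB : ∀ (E F F' : G.edgeSet) (u : V), s(E, F) ∈ M → s(F, F') ∈ M → E ≠ F' →
      u ∈ E.1 → u ∈ F.1 → u ∈ F'.1 → False) :
    ∀ (l : List G.edgeSet) (P F N : G.edgeSet) (u : V), u ∈ P.1 → u ∈ F.1 →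
      s(P, F) ∈ M →
      List.Chain (fun A B => s(A, B) ∈ M) F (l ++ [N]) →
      Tern (fun A _ B => A ≠ B) P F (l ++ [N]) →
      ∃ (v : V) (Wk : G.Walk u v), v ∈ N.1 ∧ Wk.edges = (F :: l).map Subtype.val := by
  have step : ∀ (P F X : G.edgeSet) (u : V), u ∈ P.1 → u ∈ F.1 → s(P, F) ∈ M →
      s(F, X) ∈ M → P ≠ X →
      ∃ v, v ∈ F.1 ∧ v ∈ X.1 ∧ G.Adj u v ∧ F.1 = s(u, v) := by
    intro P F X u huP huF hPF hFX hPX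
    have hndiag : ¬F.1.IsDiag := G.not_isDiag_of_mem_edgeSet F.2
    set v := Sym2.Mem.other huF with hv
    have spec : s(u, v) = F.1 := Sym2.other_spec huF
    have hvF : v ∈ F.1 := Sym2.other_mem huF
    have hadj : G.Adj u v := G.mem_edgeSet.1 (spec ▸ F.2)
    have hvX : v ∈ X.1 := by
      have hAdj : (SimpleGraph.lineGraph G).Adj F X :=
        (SimpleGraph.lineGraph G).mem_edgeSet.1 (hM _ hFX)
      obtain ⟨-, z, hzF, hzX⟩ := SimpleGraph.lineGraph_adj_iff_exists.1 hAdj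
      have : z ∈ s(u, v) := spec ▸ hzF
      rw [Sym2.mem_iff] at this
      rcases this with rfl | rfl
      · exact absurd hzX (fun h => NB P F X z hPF hFX hPX huP huF h)
      · exact hzX
    exact ⟨v, hvF, hvX, hadj, spec.symm⟩
  intro l
  induction l with
  | nil =>
    intro P F N u huP huF hPF hchain htern
    have hFN : s(F, N) ∈ M := (List.chain_cons.1 hchain).1
    have hPN : P ≠ N := htern.1
    obtain ⟨v, hvF, hvN, hadj, hFuv⟩ := step P F N u huP huF hPF hFN hPN
    exact ⟨v, SimpleGraph.Walk.cons hadj SimpleGraph.Walk.nil, hvN, by simp [hFuv]⟩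
  | cons X l' IH =>
    intro P F N u huP huF hPF hchain htern
    have hFX : s(F, X) ∈ M := (List.chain_cons.1 hchain).1
    have hchain' : List.Chain (fun A B => s(A, B) ∈ M) X (l' ++ [N]) :=
      (List.chain_cons.1 hchain).2
    have hPX : P ≠ X := htern.1
    have htern' : Tern (fun A _ B => A ≠ B) F X (l' ++ [N]) := htern.2
    obtain ⟨v, hvF, hvX, hadj, hFuv⟩ := step P F X u huP huF hPF hFX hPX
    obtain ⟨v', Wk', hv'N, hedge⟩ := IH F X N v hvF hvX hFX hchain' htern'
    exact ⟨v', SimpleGraph.Walk.cons hadj Wk', hv'N, by simp [hedge, ← hFuv]⟩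

end EulerHamAux
open SimpleGraph List

namespace EulerHamAux

lemma sum_bridge {V : Type*} {G : SimpleGraph V} (w : Sym2 V → Sym2 V → ℚ)
    (hw : ∀ e f, w e f = w f e) (a : G.edgeSet) (l : List G.edgeSet) :
    ((((a :: l).map Subtype.val).zip (((a :: l).map Subtype.val).rotate 1)).map
        fun p => w p.1 p.2).sum
      = ((((a :: l).zip (l ++ [a])).map fun q => s(q.1, q.2)).map
        fun p => Sym2.lift ⟨w, hw⟩ (p.map Subtype.val)).sum := by
  have h1 : ((a :: l).map Subtype.val).rotate 1 = (l ++ [a]).map Subtype.val := by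
    rw [List.map_cons, List.rotate_cons_succ, List.rotate_zero, List.map_append]
    simp
  rw [h1, List.map_cons]
  have h2 : (a.1 :: l.map Subtype.val) = (a :: l).map Subtype.val := by simp
  rw [h2, List.zip_map, List.map_map, List.map_map]
  refine congrArg List.sum (List.map_congr_left ?_)
  rintro ⟨x, y⟩ _
  simp [Sym2.map_pair_eq, Sym2.lift_mk]

end EulerHamAux

open SimpleGraph List EulerHamAux



open Classical in
/-- Let `G` be a finite connected simple graph with at least `3` edges which is a
double subdivision of a multigraph (witnessed by the vertex set `D`), and let `w` be
turning costs on unordered pairs of distinct adjacent edges of `G`. Weight the line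
graph of `G` by giving the edge joining adjacent edges `e` and `f` of `G` the weight
`w {e,f}`. Then for every rational `q`, `G` has an Eulerian circuit of turning cost
at most `q` iff the line graph has a Hamiltonian cycle of total weight at most `q`. -/
theorem eulerian_cost_iff_hamiltonian_weight {V : Type*} [Fintype V] (G : SimpleGraph V)
    (hconn : G.Connected) (hE : 3 ≤ Nat.card G.edgeSet) (D : Set V)
    (h1 : ∀ v ∈ D, G.degree v = 2)
    (h2 : ∀ e ∈ G.edgeSet, ∃ v ∈ D, v ∈ e)
    (h3 : ∀ v ∈ D, ∃! x, x ∈ D ∧ G.Adj v x)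
    (w : Sym2 V → Sym2 V → ℚ) (hw : ∀ e f, w e f = w f e) (q : ℚ) :
    (∃ (u : V) (C : G.Walk u u), C.IsEulerian ∧
        ((C.edges.zip (C.edges.rotate 1)).map fun p => w p.1 p.2).sum ≤ q) ↔
      (∃ (e₀ : G.edgeSet) (H : (SimpleGraph.lineGraph G).Walk e₀ e₀),
        H.IsHamiltonianCycle ∧
        (H.edges.map fun p => Sym2.lift ⟨w, hw⟩ (p.map Subtype.val)).sum ≤ q) := by
  have hm : 3 ≤ Fintype.card G.edgeSet := by rwa [← Nat.card_eq_fintype_card]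
  constructor
  · -- Euler ⇒ Hamilton
    rintro ⟨u, C, hC, hsum⟩
    have hnd : C.edges.Nodup := hC.isTrail.edges_nodup
    have hsub : ∀ e ∈ C.edges, e ∈ G.edgeSet := fun e he => C.edges_subset_edgeSet he
    have hlen : C.edges.length = Fintype.card G.edgeSet := by
      rw [← List.toFinset_card_of_nodup hnd]
      have ht : C.edges.toFinset = G.edgeFinset := by
        ext e
        simp [SimpleGraph.mem_edgeFinset, hC.mem_edges_iff]
      rw [ht, SimpleGraph.edgeFinset_card]
    have hlen3 : 3 ≤ C.edges.length := hlen ▸ hm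
    set Es : List G.edgeSet := C.edges.attachWith (· ∈ G.edgeSet) hsub with hEsdef
    have hmap : Es.map Subtype.val = C.edges := List.attachWith_map_subtype_val _
    have hEsnd : Es.Nodup := by
      refine List.Nodup.of_map Subtype.val ?_
      rw [hmap]; exact hnd
    have hEsmem : ∀ A : G.edgeSet, A ∈ Es := by
      intro A
      have hA : A.1 ∈ C.edges := hC.mem_edges_iff.2 A.2
      exact (mem_attachWith A).2 hA
    have hEslen : Es.length = C.edges.length := by rw [← hmap, List.length_map]
    obtain ⟨E₀, E₁, Etl', hEs3⟩ : ∃ E₀ E₁ Etl', Es = E₀ :: E₁ :: Etl' := by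
      rcases Es with _ | ⟨a, _ | ⟨b, t⟩⟩
      · simp only [List.length_nil] at hEslen; omega
      · simp only [List.length_cons, List.length_nil] at hEslen; omega
      · exact ⟨a, b, t, rfl⟩
    have hes3 : C.edges = E₀.1 :: E₁.1 :: Etl'.map Subtype.val := by
      rw [← hmap, hEs3]; simp
    -- dart facts
    have hesd : C.edges = C.darts.map SimpleGraph.Dart.edge := rfl
    have hshare : List.IsChain (fun x y : Sym2 V => ∃ z, z ∈ x ∧ z ∈ y) C.edges := by
      rw [hesd, List.isChain_map]
      refine (C.isChain_dartAdj_darts).imp ?_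
      intro d d' h
      refine ⟨d.snd, Sym2.mem_mk_right _ _, ?_⟩
      rw [h]
      exact Sym2.mem_mk_left _ _
    have hesne : C.edges ≠ [] := by rw [hes3]; simp
    obtain ⟨elast, hel1, hel2⟩ := getLast?_edges_mem C hesne
    obtain ⟨ehead, heh1, heh2⟩ := head?_edges_mem C hesne
    have hheadopt : C.edges.head? = some E₀.1 := by rw [hes3]; rfl
    have hehead : ehead = E₀.1 := by
      rw [hheadopt] at heh1
      exact (Option.some_inj.1 heh1).symm
    have huE₀ : u ∈ E₀.1 := hehead ▸ heh2
    have helast_mem : elast ∈ E₁.1 :: Etl'.map Subtype.val := by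
      have hq : C.edges.getLast? = (E₁.1 :: Etl'.map Subtype.val).getLast? := by
        rw [hes3, List.getLast?_cons_cons]
      rw [hq] at hel1
      obtain ⟨hne', rfl⟩ := List.mem_getLast?_eq_getLast (by rw [hel1]; rfl)
      exact List.getLast_mem hne'
    have hlne : elast ≠ E₀.1 := by
      intro h
      have hnd' := hnd
      rw [hes3, List.nodup_cons] at hnd'
      exact hnd'.1 (h ▸ helast_mem)
    have hwrapcond : ∀ x ∈ C.edges.getLast?, ∀ y ∈ ([E₀.1] : List (Sym2 V)).head?,
        (∃ z, z ∈ x ∧ z ∈ y) ∧ x ≠ y := by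
      intro x hx y hy
      rw [hel1, Option.mem_some_iff] at hx
      simp only [List.head?_cons, Option.mem_some_iff] at hy
      subst hx; subst hy
      exact ⟨⟨u, hel2, huE₀⟩, hlne⟩
    have hsharec : List.IsChain (fun x y : Sym2 V => ∃ z, z ∈ x ∧ z ∈ y)
        (C.edges ++ [E₀.1]) :=
      hshare.append (List.isChain_singleton _) (fun x hx y hy => (hwrapcond x hx y hy).1)
    have hnec : List.IsChain (fun x y : Sym2 V => x ≠ y) (C.edges ++ [E₀.1]) :=
      (List.Pairwise.isChain hnd).append (List.isChain_singleton _)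
        (fun x hx y hy => (hwrapcond x hx y hy).2)
    have hcomb := chain'_and hsharec hnec
    have hces : C.edges ++ [E₀.1] = (Es ++ [E₀]).map Subtype.val := by
      rw [List.map_append, hmap]; rfl
    rw [hces, List.isChain_map] at hcomb
    have hadjchain : List.IsChain (SimpleGraph.lineGraph G).Adj (Es ++ [E₀]) := by
      refine hcomb.imp ?_
      intro A B h
      rw [SimpleGraph.lineGraph_adj_iff_exists]
      exact ⟨fun hAB => h.2 (by rw [hAB]), h.1⟩
    rw [hEs3] at hadjchain
    have hchain : List.Chain (SimpleGraph.lineGraph G).Adj E₀ (E₁ :: (Etl' ++ [E₀])) :=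
      hadjchain
    obtain ⟨hadj01, hchainrest⟩ := List.chain_cons.1 hchain
    obtain ⟨p', hps, hpe⟩ := exists_walk_of_chain Etl' E₁ E₀ hchainrest
    have hndrest : (E₁ :: (Etl' ++ [E₀])).Nodup := by
      rw [hEs3, List.nodup_cons] at hEsnd
      rw [List.nodup_cons] at *
      rw [List.nodup_append]
      constructor
      · intro hmem
        rcases List.mem_append.1 hmem with h | h
        · exact hEsnd.2.1 h
        · simp at h
          exact hEsnd.1 (by simp [h])
      · refine ⟨hEsnd.2.2, by simp, ?_⟩
        intro x hx y hy hxy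
        simp at hy
        subst hy
        subst hxy
        exact hEsnd.1 (by simp [hx])
    have hp'path : p'.IsPath := SimpleGraph.Walk.IsPath.mk' (by rw [hps]; exact hndrest)
    have hp'len : 2 ≤ p'.length := by
      have hsl := p'.length_support
      rw [hps] at hsl
      simp at hsl
      have hL : 1 ≤ Etl'.length := by
        have h3' := hlen3
        rw [hes3] at h3'
        simp at h3'
        omega
      omega
    have hnochord : s(E₀, E₁) ∉ p'.edges := by
      rw [Sym2.eq_swap]
      exact path_no_chord p' hp'path hp'len
    have hcyc : (SimpleGraph.Walk.cons hadj01 p').IsCycle :=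
      (SimpleGraph.Walk.cons_isCycle_iff p' hadj01).2 ⟨hp'path, hnochord⟩
    have hham : (SimpleGraph.Walk.cons hadj01 p').IsHamiltonianCycle := by
      rw [SimpleGraph.Walk.isHamiltonianCycle_iff_isCycle_and_support_count_tail_eq_one]
      refine ⟨hcyc, fun A => ?_⟩
      have hsupp : (SimpleGraph.Walk.cons hadj01 p').support = E₀ :: (E₁ :: (Etl' ++ [E₀])) := by
        rw [SimpleGraph.Walk.support_cons, hps]
      rw [hsupp, List.tail_cons]
      refine @List.count_eq_one_of_mem _ instBEqOfDecidableEq _ _ _ hndrest ?_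
      have hA := hEsmem A
      rw [hEs3] at hA
      rcases List.mem_cons.1 hA with rfl | hA
      · simp
      · rcases List.mem_cons.1 hA with rfl | hA
        · simp
        · simp [hA]
    refine ⟨E₀, SimpleGraph.Walk.cons hadj01 p', hham, ?_⟩
    have hpedges : (SimpleGraph.Walk.cons hadj01 p').edges
        = (((E₀ :: E₁ :: Etl').zip ((E₁ :: Etl') ++ [E₀])).map fun qq => s(qq.1, qq.2)) := by
      rw [SimpleGraph.Walk.edges_cons, hpe]
      rw [List.cons_append, List.zip_cons_cons]
      rfl
    rw [hpedges]
    have hbr := sum_bridge w hw E₀ (E₁ :: Etl')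
    rw [← hbr]
    have hesmap : C.edges = ((E₀ :: E₁ :: Etl').map Subtype.val) := by
      rw [← hmap, hEs3]
    rw [hesmap] at hsum
    exact hsum
  · -- Hamilton ⇒ Euler
    rintro ⟨e₀, H, hH, hsum⟩
    have hnotnil : ¬H.Nil := hH.isCycle.not_nil
    have hScons : H.support = e₀ :: H.support.tail := H.support_eq_cons
    set T := H.support.tail with hTdef
    have hTcount : ∀ A, T.count A = 1 := by
      intro A
      have h := hH.isHamiltonian_tail A
      rw [SimpleGraph.Walk.support_tail_of_not_nil H hnotnil] at h
      convert h using 2 <;> exact lawful_beq_subsingleton _ _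
    have hTnd : T.Nodup := List.nodup_iff_count_le_one.2 (fun A => (hTcount A).le)
    have hTmem : ∀ A, A ∈ T := fun A => List.count_pos_iff.1 (by rw [hTcount A]; norm_num)
    have hTlen : T.length = Fintype.card G.edgeSet := by
      have h1' := H.length_support
      rw [hScons] at h1'
      simp only [List.length_cons] at h1'
      have h2' := hH.length_eq
      omega
    have hm3 : 3 ≤ T.length := hTlen ▸ hm
    have hTne : T ≠ [] := by intro h; rw [h] at hm3; simp at hm3
    have hTlastq : T.getLast? = some e₀ := by
      have h1' : H.support.getLast? = some e₀ := by
        rw [List.getLast?_eq_getLast H.support_ne_nil]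
        exact congrArg some H.getLast_support
      rwa [hScons, getLast?_cons_of_ne_nil e₀ hTne] at h1'
    have hTlast : T.getLast hTne = e₀ := by
      have h1' := List.getLast?_eq_getLast hTne
      rw [hTlastq] at h1'
      exact (Option.some_inj.1 h1').symm
    set T' := T.dropLast with hT'def
    have hTsplit : T = T' ++ [e₀] := by
      rw [hT'def, ← hTlast]
      exact (List.dropLast_append_getLast hTne).symm
    have hT'facts : T'.Nodup ∧ e₀ ∉ T' := by
      have h := hTnd
      rw [hTsplit, List.nodup_append] at h
      exact ⟨h.1, fun hmem => h.2.2 _ hmem _ (by simp) rfl⟩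
    have hT'len : 2 ≤ T'.length := by
      have hdl := List.length_dropLast (xs := T)
      rw [← hT'def] at hdl
      omega
    have hT'ne : T' ≠ [] := by intro h; rw [h] at hT'len; simp at hT'len
    obtain ⟨c, ls, hT'c⟩ : ∃ c ls, T' = c :: ls := by
      rcases hq : T' with _ | ⟨c, ls⟩
      · exact absurd hq hT'ne
      · exact ⟨c, ls, rfl⟩
    have hlsne : ls ≠ [] := by
      intro h
      rw [hT'c, h] at hT'len
      simp at hT'len
    -- H.edges as a zip of cyclically consecutive pairs
    have hZeq : H.support.zip T = (e₀ :: T').zip (T' ++ [e₀]) := by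
      calc H.support.zip T = ((e₀ :: T') ++ [e₀]).zip ((T' ++ [e₀]) ++ []) := by
            rw [hScons, hTsplit]; simp
        _ = (e₀ :: T').zip (T' ++ [e₀]) ++ ([e₀].zip []) := List.zip_append (by simp)
        _ = (e₀ :: T').zip (T' ++ [e₀]) := by simp
    have hMzip : H.edges = ((e₀ :: T').zip (T' ++ [e₀])).map (fun qq => s(qq.1, qq.2)) := by
      rw [edges_eq_zip H, ← hTdef, hZeq]
    have hMsub : ∀ e ∈ H.edges, e ∈ (SimpleGraph.lineGraph G).edgeSet :=
      fun e he => H.edges_subset_edgeSet he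
    have hMnd : H.edges.Nodup := hH.isCycle.isCircuit.isTrail.edges_nodup
    have hlenM : H.edges.length = Fintype.card G.edgeSet := by
      rw [SimpleGraph.Walk.length_edges, hH.length_eq]
    -- each vertex of the line graph lies on exactly two edges of the cycle
    have heven : ∀ X : G.edgeSet, Even (H.edges.countP (fun s => decide (X ∈ s))) := by
      intro X
      exact (hH.isCycle.isCircuit.isTrail.even_countP_edges_iff X).2
        (fun hc => absurd rfl hc)
    have hpos : ∀ X : G.edgeSet, 0 < H.edges.countP (fun s => decide (X ∈ s)) := by
      intro X
      rw [List.countP_pos_iff]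
      rcases mem_edge_of_mem_support H X (hH.mem_support X) with heq | ⟨e, he, hXe⟩
      · subst heq
        refine ⟨s(X, c), ?_, by simp⟩
        rw [hMzip, hT'c]
        simp [List.zip_cons_cons]
      · exact ⟨e, he, by simp [hXe]⟩
    have hsc := sum_countP (fun (X : G.edgeSet) (s : Sym2 G.edgeSet) => decide (X ∈ s))
        (fun x s => by simp) H.edges
        (fun e he => (SimpleGraph.lineGraph G).not_isDiag_of_mem_edgeSet (hMsub e he))
    set f : G.edgeSet → ℕ := fun X => H.edges.countP (fun s => decide (X ∈ s)) with hfdef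
    have hcount2 : ∀ X : G.edgeSet, H.edges.countP (fun s => decide (X ∈ s)) = 2 := by
      by_contra hcon
      push_neg at hcon
      obtain ⟨X₀, hX₀⟩ := hcon
      have hge : ∀ X : G.edgeSet, 2 ≤ f X := by
        intro X
        obtain ⟨k, hk⟩ := heven X
        have := hpos X
        simp only [hfdef]
        omega
      have hge3 : 3 ≤ f X₀ := by
        have h2' := hge X₀
        have h3' : f X₀ ≠ 2 := hX₀
        omega
      have hbound := Finset.card_nsmul_le_sum (Finset.univ.erase X₀) f 2
          (fun x _ => hge x)
      rw [Finset.card_erase_of_mem (Finset.mem_univ _), Finset.card_univ,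
        smul_eq_mul] at hbound
      have hbound' : (Fintype.card G.edgeSet - 1) * 2 ≤ ∑ x ∈ Finset.univ.erase X₀, f x := by
        simpa using hbound
      have hsplit := Finset.add_sum_erase Finset.univ f (Finset.mem_univ X₀)
      have hsc' : ∑ x : G.edgeSet, f x = 2 * H.edges.length := hsc
      rw [hsc', hlenM] at hsplit
      omega
    have htwo : ∀ X : G.edgeSet, ∃ A B, A ≠ B ∧ s(X, A) ∈ H.edges ∧ s(X, B) ∈ H.edges ∧
        ∀ Y, s(X, Y) ∈ H.edges → Y = A ∨ Y = B := fun X =>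
      exists_two H.edges hMnd X (fun s => decide (X ∈ s)) (fun s => by simp) (hcount2 X)
    -- vertices in D have at most two neighbours
    have hD2 : ∀ v ∈ D, ∀ x y z, G.Adj v x → G.Adj v y → G.Adj v z → x ≠ y →
        z = x ∨ z = y := by
      intro v hv x y z hx hy hz hxy
      by_contra hzz
      push_neg at hzz
      have hdeg := h1 v hv
      have hsub3 : ({x, y, z} : Finset V) ⊆ G.neighborFinset v := by
        intro t ht
        rw [SimpleGraph.mem_neighborFinset]
        simp only [Finset.mem_insert, Finset.mem_singleton] at ht
        rcases ht with rfl | rfl | rfl <;> assumption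
      have hcard3 : ({x, y, z} : Finset V).card = 3 := by
        rw [Finset.card_insert_of_notMem (by
              simp only [Finset.mem_insert, Finset.mem_singleton]
              push_neg
              exact ⟨hxy, fun hh => hzz.1 hh.symm⟩),
          Finset.card_insert_of_notMem (by
              simp only [Finset.mem_singleton]
              exact fun hh => hzz.2 hh.symm),
          Finset.card_singleton]
      have hle := Finset.card_le_card hsub3
      rw [hcard3, G.card_neighborFinset_eq_degree, hdeg] at hle
      omega
    have hNB := no_bounce D hD2 h2 h3 H.edges hMsub htwo
    -- the chain of consecutive pairs
    have hchainT : List.Chain (fun A B => s(A, B) ∈ H.edges) e₀ T := by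
      refine List.IsChain.imp ?_ (chain_pairs T e₀)
      intro x y hxy
      rw [hMzip, ← hZeq]
      rw [← hScons] at hxy
      exact List.mem_map_of_mem hxy
    have hchainT' : List.Chain (fun A B => s(A, B) ∈ H.edges) e₀ (T' ++ [e₀]) := by
      rw [← hTsplit]
      exact hchainT
    have hwrap : s(T'.getLast hT'ne, e₀) ∈ H.edges := by
      have h := chain_getLast T' e₀ e₀ hchainT'
      rwa [List.getLast_cons hT'ne] at h
    set Ee := T'.getLast hT'ne with hEedef
    have hAdjw : (SimpleGraph.lineGraph G).Adj Ee e₀ :=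
      (SimpleGraph.lineGraph G).mem_edgeSet.1 (hMsub _ hwrap)
    obtain ⟨hne_w, u₀, hu₀Ee, hu₀e₀⟩ := SimpleGraph.lineGraph_adj_iff_exists.1 hAdjw
    -- the ternary distinctness condition
    have hEemem : Ee ∈ ls := by
      have h1' : T'.getLast? = some Ee := List.getLast?_eq_getLast hT'ne
      have h2' : ls.getLast? = some Ee := by
        rw [← getLast?_cons_of_ne_nil c hlsne, ← hT'c]
        exact h1'
      exact mem_of_getLast?' h2'
    have hEec : Ee ≠ c := by
      intro h
      have hnod := hT'facts.1
      rw [hT'c, List.nodup_cons] at hnod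
      exact hnod.1 (h ▸ hEemem)
    have htern : Tern (fun A _ B => A ≠ B) Ee e₀ (T' ++ [e₀]) := by
      rw [hT'c]
      refine ⟨hEec, ?_⟩
      refine tern_ne ls e₀ c e₀ ?_ ?_
      · rw [List.nodup_cons, ← hT'c]
        exact ⟨hT'facts.2, hT'facts.1⟩
      · have hpm := penult_mem ls e₀ c hlsne
        intro hconp
        rw [hconp, ← hT'c] at hpm
        exact hT'facts.2 hpm
    -- build the Eulerian circuit
    have hchainB : List.Chain (fun A B => s(A, B) ∈ H.edges) e₀ (T' ++ [e₀]) := hchainT'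
    obtain ⟨v, Wk, hvN, hWedges⟩ :=
      build H.edges hMsub hNB T' Ee e₀ e₀ u₀ hu₀Ee hu₀e₀ hwrap hchainB htern
    have hWne : Wk.edges ≠ [] := by rw [hWedges]; simp
    obtain ⟨el, hel1, hel2⟩ := getLast?_edges_mem Wk hWne
    have hellast : el = Ee.1 := by
      have hq : Wk.edges.getLast? = some Ee.1 := by
        rw [hWedges, List.getLast?_map]
        have : (e₀ :: T').getLast? = some Ee := by
          rw [List.getLast?_eq_getLast (by simp), List.getLast_cons hT'ne]
        rw [this]
        rfl
      rw [hq] at hel1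
      exact (Option.some_inj.1 hel1).symm
    have hveq : v = u₀ := shared_unique hne_w (hellast ▸ hel2) hvN hu₀Ee hu₀e₀
    subst hveq
    refine ⟨v, Wk, ?_, ?_⟩
    · -- Eulerian
      intro e he
      refine List.count_eq_one_of_mem ?_ ?_
      · rw [hWedges]
        exact List.Nodup.map Subtype.val_injective
          (List.nodup_cons.2 ⟨hT'facts.2, hT'facts.1⟩)
      · have hmem : (⟨e, he⟩ : G.edgeSet) ∈ T := hTmem _
        rw [hTsplit, List.mem_append] at hmem
        have hmem2 : (⟨e, he⟩ : G.edgeSet) ∈ e₀ :: T' := by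
          rcases hmem with h | h
          · exact List.mem_cons_of_mem _ h
          · simp only [List.mem_singleton] at h
            rw [h]
            exact List.mem_cons_self
        rw [hWedges]
        exact List.mem_map.2 ⟨⟨e, he⟩, hmem2, rfl⟩
    · -- the turning cost
      rw [hWedges]
      have hbr := sum_bridge w hw e₀ T'
      rw [hbr, ← hMzip]
      exact hsum
end

section
/- Let d be a positive integer, let H be the box (Cartesian) product of the cycle graph on Fin (2d) with the path graph on Fin d, a simple graph on vertex set Fin (2d) × Fin d, and let σ be a fixed-point-free involution of Fin (2d). Then there exists a family of paths P_i in H indexed by i ∈ Fin (2d) such that: P_i is a path from (i, 0) to (σ i, 0); P_{σ i} is the reverse of P_i; and for all i, j with j ∉ {i, σ i}, the paths P_i and P_j have no edge in common. -/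
open SimpleGraph

namespace BoxProdAux

variable {d : ℕ}

abbrev HH (d : ℕ) : SimpleGraph (Fin (2*d) × Fin d) :=
  (SimpleGraph.cycleGraph (2*d)).boxProd (SimpleGraph.pathGraph d)

lemma cycle_adj_succ {k : ℕ} (h : k + 1 < 2*d) :
    (cycleGraph (2*d)).Adj ⟨k, by omega⟩ ⟨k+1, h⟩ := by
  rw [SimpleGraph.cycleGraph_adj']
  right
  rw [Fin.sub_def]
  simp only
  have h2 : (2*d - k) + (k+1) = 2*d + 1 := by omega
  rw [h2, Nat.add_mod_left, Nat.mod_eq_of_lt (by omega)]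

lemma path_adj_succ {m : ℕ} (h : m + 1 < d) :
    (pathGraph d).Adj ⟨m, by omega⟩ ⟨m+1, h⟩ := by
  rw [SimpleGraph.pathGraph_adj]; left; rfl

/-- vertical walk up column `c` from level 0 to level `k`. -/
def upWalk (c : Fin (2*d)) : (k : ℕ) → (hk : k < d) →
    (HH d).Walk (c, ⟨0, Nat.zero_lt_of_lt hk⟩) (c, ⟨k, hk⟩)
  | 0, _ => SimpleGraph.Walk.nil
  | k+1, h => (upWalk c k (by omega)).concat
      (SimpleGraph.boxProd_adj.mpr (Or.inr ⟨path_adj_succ h, rfl⟩))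

/-- horizontal walk at level `ℓ` from column `a` to column `a+m`. -/
def rightWalk (ℓ : Fin d) (a : ℕ) : (m : ℕ) → (h : a + m < 2*d) →
    (HH d).Walk (⟨a, by omega⟩, ℓ) (⟨a+m, h⟩, ℓ)
  | 0, _ => SimpleGraph.Walk.nil
  | m+1, h => (rightWalk ℓ a m (by omega)).concat
      (SimpleGraph.boxProd_adj.mpr (Or.inl ⟨cycle_adj_succ h, rfl⟩))

lemma upWalk_support (c : Fin (2*d)) (k : ℕ) :
    ∀ (hk : k < d), ∀ x ∈ (upWalk c k hk).support, x.1 = c ∧ x.2.val ≤ k := by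
  induction k with
  | zero =>
    intro hk x hx
    simp only [upWalk, SimpleGraph.Walk.support_nil, List.mem_singleton] at hx
    subst hx; exact ⟨rfl, le_refl _⟩
  | succ k ih =>
    intro hk x hx
    simp only [upWalk, SimpleGraph.Walk.support_concat, List.concat_eq_append,
      List.mem_append, List.mem_singleton] at hx
    rcases hx with hx | hx
    · obtain ⟨h1, h2⟩ := ih (by omega) x hx
      exact ⟨h1, by omega⟩
    · subst hx; exact ⟨rfl, le_refl _⟩

lemma upWalk_isPath (c : Fin (2*d)) (k : ℕ) :
    ∀ (hk : k < d), (upWalk c k hk).IsPath := by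
  induction k with
  | zero => intro hk; exact SimpleGraph.Walk.IsPath.nil
  | succ k ih =>
    intro hk
    rw [SimpleGraph.Walk.isPath_def]
    simp only [upWalk, SimpleGraph.Walk.support_concat, List.concat_eq_append]
    rw [List.nodup_append]
    refine ⟨(SimpleGraph.Walk.isPath_def _).mp (ih (by omega)), List.nodup_singleton _, ?_⟩
    intro x hx y hx' hxy
    rw [List.mem_singleton] at hx'
    subst hx'
    subst hxy
    have := (upWalk_support c k (by omega) _ hx).2
    simp at this

lemma upWalk_edges (c : Fin (2*d)) (k : ℕ) :
    ∀ (hk : k < d), ∀ e ∈ (upWalk c k hk).edges, ∀ x ∈ e, x.1 = c := by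
  induction k with
  | zero => intro hk e he; simp [upWalk] at he
  | succ k ih =>
    intro hk e he
    simp only [upWalk, SimpleGraph.Walk.edges_concat, List.concat_eq_append,
      List.mem_append, List.mem_singleton] at he
    rcases he with he | he
    · exact ih (by omega) e he
    · subst he
      intro x hx
      rw [Sym2.mem_iff] at hx
      rcases hx with hx | hx <;> (subst hx; rfl)

lemma rightWalk_support (ℓ : Fin d) (a m : ℕ) :
    ∀ (h : a + m < 2*d), ∀ x ∈ (rightWalk ℓ a m h).support,
      x.2 = ℓ ∧ a ≤ x.1.val ∧ x.1.val ≤ a + m := by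
  induction m with
  | zero =>
    intro h x hx
    simp only [rightWalk, SimpleGraph.Walk.support_nil, List.mem_singleton] at hx
    subst hx; exact ⟨rfl, Nat.le_refl a, Nat.le_refl a⟩
  | succ m ih =>
    intro h x hx
    simp only [rightWalk, SimpleGraph.Walk.support_concat, List.concat_eq_append,
      List.mem_append, List.mem_singleton] at hx
    rcases hx with hx | hx
    · obtain ⟨h1, h2, h3⟩ := ih (by omega) x hx
      exact ⟨h1, h2, by omega⟩
    · subst hx; exact ⟨rfl, Nat.le_add_right a (m+1), Nat.le_refl _⟩

lemma rightWalk_isPath (ℓ : Fin d) (a m : ℕ) :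
    ∀ (h : a + m < 2*d), (rightWalk ℓ a m h).IsPath := by
  induction m with
  | zero => intro h; exact SimpleGraph.Walk.IsPath.nil
  | succ m ih =>
    intro h
    rw [SimpleGraph.Walk.isPath_def]
    simp only [rightWalk, SimpleGraph.Walk.support_concat, List.concat_eq_append]
    rw [List.nodup_append]
    refine ⟨(SimpleGraph.Walk.isPath_def _).mp (ih (by omega)), List.nodup_singleton _, ?_⟩
    intro x hx y hx' hxy
    rw [List.mem_singleton] at hx'
    subst hx'
    subst hxy
    have := (rightWalk_support ℓ a m (by omega) _ hx).2.2
    simp only at this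
    omega

lemma rightWalk_edges (ℓ : Fin d) (a m : ℕ) :
    ∀ (h : a + m < 2*d), ∀ e ∈ (rightWalk ℓ a m h).edges, ∀ x ∈ e, x.2 = ℓ := by
  induction m with
  | zero => intro h e he; simp [rightWalk] at he
  | succ m ih =>
    intro h e he
    simp only [rightWalk, SimpleGraph.Walk.edges_concat, List.concat_eq_append,
      List.mem_append, List.mem_singleton] at he
    rcases he with he | he
    · exact ih (by omega) e he
    · subst he
      intro x hx
      rw [Sym2.mem_iff] at hx
      rcases hx with hx | hx <;> (subst hx; rfl)

/-- The main walk for a representative `i` with `i.val < (σ i).val`. -/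
def mainWalk (hd : 0 < d) (σ : Fin (2*d) → Fin (2*d)) (ℓ : Fin (2*d) → Fin d)
    (i : Fin (2*d)) (hlt : i.val < (σ i).val) :
    (HH d).Walk (i, ⟨0, hd⟩) (σ i, ⟨0, hd⟩) :=
  ((upWalk i (ℓ i).val (ℓ i).isLt).append
      ((rightWalk (ℓ i) i.val ((σ i).val - i.val)
          (by have := (σ i).isLt; omega)).copy rfl
        (by
          have hv : i.val + ((σ i).val - i.val) = (σ i).val := by omega
          exact congrArg (fun z => (z, ℓ i)) (Fin.ext hv)))).append
    (upWalk (σ i) (ℓ i).val (ℓ i).isLt).reverse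

lemma mainWalk_isPath (hd : 0 < d) (σ : Fin (2*d) → Fin (2*d)) (ℓ : Fin (2*d) → Fin d)
    (i : Fin (2*d)) (hlt : i.val < (σ i).val) :
    (mainWalk hd σ ℓ i hlt).IsPath := by
  have hne : i.val ≠ (σ i).val := by omega
  rw [SimpleGraph.Walk.isPath_def, mainWalk]
  rw [SimpleGraph.Walk.support_append, SimpleGraph.Walk.support_append,
    SimpleGraph.Walk.support_copy]
  set A := upWalk i (ℓ i).val (ℓ i).isLt with hA
  set R := rightWalk (ℓ i) i.val ((σ i).val - i.val) (by have := (σ i).isLt; omega) with hR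
  set C := upWalk (σ i) (ℓ i).val (ℓ i).isLt with hC
  have hAsupp : ∀ x ∈ A.support, x.1 = i ∧ x.2.val ≤ (ℓ i).val :=
    upWalk_support i (ℓ i).val (ℓ i).isLt
  have hRsupp : ∀ x ∈ R.support, x.2 = ℓ i ∧ i.val ≤ x.1.val ∧ x.1.val ≤ (σ i).val := by
    intro x hx
    obtain ⟨h1, h2, h3⟩ := rightWalk_support (ℓ i) i.val ((σ i).val - i.val) _ x hx
    exact ⟨h1, h2, by omega⟩
  have hCsupp : ∀ x ∈ C.support, x.1 = σ i ∧ x.2.val ≤ (ℓ i).val :=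
    upWalk_support (σ i) (ℓ i).val (ℓ i).isLt
  have hAnd : A.support.Nodup := (SimpleGraph.Walk.isPath_def _).mp (upWalk_isPath _ _ _)
  have hRnd : R.support.Nodup := (SimpleGraph.Walk.isPath_def _).mp (rightWalk_isPath _ _ _ _)
  have hCnd : C.support.Nodup := (SimpleGraph.Walk.isPath_def _).mp (upWalk_isPath _ _ _)
  have hCrnd : C.reverse.support.Nodup := by
    rw [SimpleGraph.Walk.support_reverse]; exact List.nodup_reverse.mpr hCnd
  have hRtail : ∀ x ∈ R.support.tail, x.2 = ℓ i ∧ i.val < x.1.val ∧ x.1.val ≤ (σ i).val := by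
    intro x hx
    have hx' : x ∈ R.support := List.mem_of_mem_tail hx
    obtain ⟨h1, h2, h3⟩ := hRsupp x hx'
    refine ⟨h1, ?_, h3⟩
    rcases Nat.lt_or_ge i.val x.1.val with h | h
    · exact h
    · exfalso
      have hxeq : x = (⟨i.val, by omega⟩, ℓ i) := by
        refine Prod.ext (Fin.ext ?_) h1
        simp only
        omega
      have := SimpleGraph.Walk.support_eq_cons R
      rw [this] at hRnd
      rw [hxeq] at hx
      exact (List.nodup_cons.mp hRnd).1 hx
  have hCtail : ∀ x ∈ C.reverse.support.tail, x.1 = σ i ∧ x.2.val < (ℓ i).val := by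
    intro x hx
    have hx' : x ∈ C.reverse.support := List.mem_of_mem_tail hx
    rw [SimpleGraph.Walk.support_reverse, List.mem_reverse] at hx'
    obtain ⟨h1, h2⟩ := hCsupp x hx'
    refine ⟨h1, ?_⟩
    rcases Nat.lt_or_ge x.2.val (ℓ i).val with h | h
    · exact h
    · exfalso
      have hxeq : x = (σ i, ⟨(ℓ i).val, (ℓ i).isLt⟩) := by
        refine Prod.ext h1 (Fin.ext ?_)
        simp only
        omega
      have := SimpleGraph.Walk.support_eq_cons C.reverse
      rw [this] at hCrnd
      rw [hxeq] at hx
      exact (List.nodup_cons.mp hCrnd).1 hx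
  rw [List.nodup_append, List.nodup_append]
  refine ⟨⟨hAnd, hRnd.tail, ?_⟩, hCrnd.tail, ?_⟩
  · intro x hxA y hxR hxy
    subst hxy
    have h1 := (hAsupp x hxA).1
    have h2 := (hRtail x hxR).2.1
    rw [h1] at h2
    omega
  · intro x hx y hxC hxy
    subst hxy
    obtain ⟨hc1, hc2⟩ := hCtail x hxC
    rw [List.mem_append] at hx
    rcases hx with hx | hx
    · have h1 := (hAsupp x hx).1
      rw [h1] at hc1
      exact hne (congrArg Fin.val hc1)
    · have h2 := (hRtail x hx).1
      rw [h2] at hc2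
      omega

lemma mainWalk_edges (hd : 0 < d) (σ : Fin (2*d) → Fin (2*d)) (ℓ : Fin (2*d) → Fin d)
    (i : Fin (2*d)) (hlt : i.val < (σ i).val) :
    ∀ e ∈ (mainWalk hd σ ℓ i hlt).edges,
      (∀ x ∈ e, x.1 = i) ∨ (∀ x ∈ e, x.1 = σ i) ∨ (∀ x ∈ e, x.2 = ℓ i) := by
  intro e he
  rw [mainWalk, SimpleGraph.Walk.edges_append, SimpleGraph.Walk.edges_append,
    SimpleGraph.Walk.edges_copy, SimpleGraph.Walk.edges_reverse] at he
  rw [List.mem_append, List.mem_append, List.mem_reverse] at he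
  rcases he with (he | he) | he
  · exact Or.inl (upWalk_edges _ _ _ e he)
  · exact Or.inr (Or.inr (rightWalk_edges _ _ _ _ e he))
  · exact Or.inr (Or.inl (upWalk_edges _ _ _ e he))

lemma mainWalk_congr (hd : 0 < d) (σ : Fin (2*d) → Fin (2*d)) (ℓ : Fin (2*d) → Fin d)
    (i i' : Fin (2*d)) (h : i = i') (hlt : i.val < (σ i).val) (hlt' : i'.val < (σ i').val) :
    mainWalk hd σ ℓ i hlt =
      (mainWalk hd σ ℓ i' hlt').copy (by rw [h]) (by rw [h]) := by
  subst h; rfl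

/-- level assignment -/
lemma exists_level (hd : 0 < d) (σ : Fin (2*d) → Fin (2*d)) (hinv : Function.Involutive σ)
    (hfp : ∀ i, σ i ≠ i) :
    ∃ ℓ : Fin (2*d) → Fin d, (∀ i, ℓ (σ i) = ℓ i) ∧
      ∀ i j, ℓ i = ℓ j → j = i ∨ j = σ i := by
  classical
  have hcard : Fintype.card {i : Fin (2*d) // i < σ i} = d := by
    rw [Fintype.card_subtype]
    set A := Finset.univ.filter (fun i : Fin (2*d) => i < σ i) with hA
    set B := Finset.univ.filter (fun i : Fin (2*d) => σ i < i) with hB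
    have hAB : A.card = B.card := by
      apply Finset.card_bij (fun i _ => σ i)
      · intro a ha
        rw [hB, Finset.mem_filter]
        rw [hA, Finset.mem_filter] at ha
        exact ⟨Finset.mem_univ _, by rw [hinv]; exact ha.2⟩
      · intro a _ b _ hab
        exact hinv.injective hab
      · intro b hb
        rw [hB, Finset.mem_filter] at hb
        exact ⟨σ b, by
          rw [hA, Finset.mem_filter]
          exact ⟨Finset.mem_univ _, by rw [hinv]; exact hb.2⟩, hinv b⟩
    have hdisj : Disjoint A B := by
      rw [Finset.disjoint_left]
      intro i hiA hiB
      rw [hA, Finset.mem_filter] at hiA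
      rw [hB, Finset.mem_filter] at hiB
      exact absurd hiA.2 (not_lt.mpr (le_of_lt hiB.2))
    have hunion : A ∪ B = Finset.univ := by
      ext i
      simp only [hA, hB, Finset.mem_union, Finset.mem_filter, Finset.mem_univ, true_and,
        iff_true]
      rcases lt_or_gt_of_ne (hfp i) with h | h
      · exact Or.inr h
      · exact Or.inl h
    have h2d : A.card + B.card = 2*d := by
      rw [← Finset.card_union_of_disjoint hdisj, hunion, Finset.card_univ, Fintype.card_fin]
    omega
  let e := Fintype.equivFinOfCardEq hcard
  refine ⟨fun i => if h : i < σ i then e ⟨i, h⟩ else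
      e ⟨σ i, by
        rw [hinv i]
        exact lt_of_le_of_ne (not_lt.mp h) (hfp i)⟩, ?_, ?_⟩
  · intro i
    by_cases h : i < σ i
    · have h2 : ¬ σ i < σ (σ i) := by rw [hinv i]; exact not_lt.mpr (le_of_lt h)
      beta_reduce
      rw [dif_neg h2, dif_pos h]
      exact congrArg e (Subtype.ext (hinv i))
    · have h' : σ i < i := lt_of_le_of_ne (not_lt.mp h) (hfp i)
      have h2 : σ i < σ (σ i) := by rw [hinv i]; exact h'
      beta_reduce
      rw [dif_pos h2, dif_neg h]
  · intro i j hij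
    beta_reduce at hij
    by_cases hi : i < σ i <;> by_cases hj : j < σ j
    · rw [dif_pos hi, dif_pos hj] at hij
      have := congrArg Subtype.val (e.injective hij)
      exact Or.inl (this.symm)
    · rw [dif_pos hi, dif_neg hj] at hij
      have h1 : i = σ j := congrArg Subtype.val (e.injective hij)
      right
      rw [h1, hinv]
    · rw [dif_neg hi, dif_pos hj] at hij
      have h1 : σ i = j := congrArg Subtype.val (e.injective hij)
      exact Or.inr h1.symm
    · rw [dif_neg hi, dif_neg hj] at hij
      have h1 : σ i = σ j := congrArg Subtype.val (e.injective hij)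
      exact Or.inl (hinv.injective h1).symm

end BoxProdAux

/-- In the box product of the cycle graph on `Fin (2*d)` with the path graph on
`Fin d` (`d` positive), for every fixed-point-free involution `σ` of `Fin (2*d)`
there is a family of paths `P i` from `(i, 0)` to `(σ i, 0)` such that `P (σ i)` is
the reverse of `P i` and paths indexed by `i` and `j` with `j ∉ {i, σ i}` share no
edge. -/
theorem boxProd_edge_disjoint_paths (d : ℕ) (hd : 0 < d)
    (σ : Fin (2 * d) → Fin (2 * d)) (hinv : Function.Involutive σ)
    (hfp : ∀ i, σ i ≠ i) :
    ∃ P : (i : Fin (2 * d)) →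
        ((SimpleGraph.cycleGraph (2 * d)).boxProd (SimpleGraph.pathGraph d)).Walk
          (i, ⟨0, hd⟩) (σ i, ⟨0, hd⟩),
      (∀ i, (P i).IsPath) ∧
      (∀ i, P (σ i) = ((P i).reverse.copy rfl (by rw [hinv i]))) ∧
      (∀ i j, j ≠ i → j ≠ σ i → ∀ e ∈ (P i).edges, e ∉ (P j).edges) := by
  classical
  obtain ⟨ℓ, hℓσ, hℓinj⟩ := BoxProdAux.exists_level hd σ hinv hfp
  have hlt2 : ∀ i : Fin (2*d), ¬ i.val < (σ i).val → (σ i).val < (σ (σ i)).val := by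
    intro i h
    rw [hinv i]
    have hne : (σ i).val ≠ i.val := fun hc => hfp i (Fin.ext hc)
    omega
  set P : (i : Fin (2 * d)) →
      ((SimpleGraph.cycleGraph (2 * d)).boxProd (SimpleGraph.pathGraph d)).Walk
        (i, ⟨0, hd⟩) (σ i, ⟨0, hd⟩) :=
    fun i => if h : i.val < (σ i).val then BoxProdAux.mainWalk hd σ ℓ i h
      else ((BoxProdAux.mainWalk hd σ ℓ (σ i) (hlt2 i h)).reverse.copy
        (by rw [hinv i]) rfl) with hP
  have hPpos : ∀ (i : Fin (2*d)) (h : i.val < (σ i).val),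
      P i = BoxProdAux.mainWalk hd σ ℓ i h := by
    intro i h
    simp only [hP]
    rw [dif_pos h]
  have hPneg : ∀ (i : Fin (2*d)) (h : ¬ i.val < (σ i).val),
      P i = ((BoxProdAux.mainWalk hd σ ℓ (σ i) (hlt2 i h)).reverse.copy
        (by rw [hinv i]) rfl) := by
    intro i h
    simp only [hP]
    rw [dif_neg h]
  have hQ : ∀ i, ∀ e ∈ (P i).edges,
      (∀ x ∈ e, x.1 = i) ∨ (∀ x ∈ e, x.1 = σ i) ∨ (∀ x ∈ e, x.2 = ℓ i) := by
    intro i e he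
    by_cases h : i.val < (σ i).val
    · rw [hPpos i h] at he
      exact BoxProdAux.mainWalk_edges hd σ ℓ i h e he
    · rw [hPneg i h] at he
      rw [SimpleGraph.Walk.edges_copy, SimpleGraph.Walk.edges_reverse,
        List.mem_reverse] at he
      have := BoxProdAux.mainWalk_edges hd σ ℓ (σ i) (hlt2 i h) e he
      rw [hinv i, hℓσ i] at this
      rcases this with h1 | h1 | h1
      · exact Or.inr (Or.inl h1)
      · exact Or.inl h1
      · exact Or.inr (Or.inr h1)
  refine ⟨P, ?_, ?_, ?_⟩
  · intro i
    by_cases h : i.val < (σ i).val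
    · rw [hPpos i h]
      exact BoxProdAux.mainWalk_isPath hd σ ℓ i h
    · rw [hPneg i h]
      rw [SimpleGraph.Walk.isPath_copy, SimpleGraph.Walk.isPath_reverse_iff]
      exact BoxProdAux.mainWalk_isPath hd σ ℓ (σ i) (hlt2 i h)
  · intro i
    by_cases h : i.val < (σ i).val
    · have h2 : ¬ (σ i).val < (σ (σ i)).val := by rw [hinv i]; omega
      rw [hPneg (σ i) h2, hPpos i h]
      rw [BoxProdAux.mainWalk_congr hd σ ℓ (σ (σ i)) i (hinv i) (hlt2 (σ i) h2) h]
      rw [SimpleGraph.Walk.reverse_copy, SimpleGraph.Walk.copy_copy]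
    · have h' := hlt2 i h
      rw [hPpos (σ i) h', hPneg i h]
      rw [SimpleGraph.Walk.reverse_copy, SimpleGraph.Walk.reverse_reverse,
        SimpleGraph.Walk.copy_copy]
      rfl
  · intro i j hji hjσ e hei hej
    have hi := hQ i e hei
    have hj := hQ j e hej
    have hij : i ≠ j := fun hc => hji hc.symm
    have h1 : σ i ≠ j := fun hc => hjσ hc.symm
    have h2 : i ≠ σ j := fun hc => h1 (by rw [hc, hinv])
    have h3 : σ i ≠ σ j := fun hc => hij (hinv.injective hc)
    revert hei hi hj
    induction e using Sym2.ind with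
    | _ u v =>
      intro hei hi hj
      have hadj : ((SimpleGraph.cycleGraph (2*d)).boxProd (SimpleGraph.pathGraph d)).Adj u v :=
        SimpleGraph.Walk.adj_of_mem_edges _ hei
      have hu : u ∈ s(u,v) := Sym2.mem_mk_left u v
      have hv : v ∈ s(u,v) := Sym2.mem_mk_right u v
      rcases hi with hi | hi | hi <;> rcases hj with hj | hj | hj
      · exact hij ((hi u hu).symm.trans (hj u hu))
      · exact h2 ((hi u hu).symm.trans (hj u hu))
      · exact hadj.ne (Prod.ext ((hi u hu).trans (hi v hv).symm)
          ((hj u hu).trans (hj v hv).symm))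
      · exact h1 ((hi u hu).symm.trans (hj u hu))
      · exact h3 ((hi u hu).symm.trans (hj u hu))
      · exact hadj.ne (Prod.ext ((hi u hu).trans (hi v hv).symm)
          ((hj u hu).trans (hj v hv).symm))
      · exact hadj.ne (Prod.ext ((hj u hu).trans (hj v hv).symm)
          ((hi u hu).trans (hi v hv).symm))
      · exact hadj.ne (Prod.ext ((hj u hu).trans (hj v hv).symm)
          ((hi u hu).trans (hi v hv).symm))
      · rcases hℓinj i j ((hi u hu).symm.trans (hj u hu)) with h | h
        · exact hji h
        · exact hjσ h
end

section
/- Let G be a finite simple graph and suppose that for every vertex v we are given a fixed-point-free involution μ_v of the set of edges of G incident with v (a transition system). Call a nonempty closed trail W in G μ-compatible if for every pair of consecutive edges of W meeting at a vertex v — including the pair formed by the last and first edges of W at its base vertex — the involution μ_v maps one edge of the pair to the other. If G has a μ-compatible Eulerian circuit, then every nonempty μ-compatible closed trail in G uses every edge of G. -/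
/-- A closed walk `W` (based at `u`) is compatible with a transition system `μ`
(which assigns to each vertex `v` an involution `μ v` of the edges at `v`) if for
every pair of consecutive edges of `W` meeting at a vertex `v` — including the pair
formed by the last and first edges of `W` at `u` — the involution `μ v` maps one
edge of the pair to the other. -/
def SimpleGraph.Walk.TransCompatible {V : Type*} {G : SimpleGraph V}
    (μ : V → Sym2 V → Sym2 V) {u : V} (W : G.Walk u u) : Prop :=
  ∀ (i : ℕ) (h : i < W.edges.length),
    μ (W.support.get ⟨i + 1, by
        rw [SimpleGraph.Walk.length_support]
        rw [SimpleGraph.Walk.length_edges] at h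
        omega⟩)
      (W.edges.get ⟨i, h⟩) =
      W.edges.get ⟨(i + 1) % W.edges.length, Nat.mod_lt _ (Nat.zero_lt_of_lt h)⟩

namespace TransAux

open SimpleGraph

variable {V : Type*} {G : SimpleGraph V}

lemma dart_edge_mem_incidenceSet_snd (d : G.Dart) : d.edge ∈ G.incidenceSet d.snd :=
  ⟨d.edge_mem, Sym2.mem_mk_right _ _⟩

lemma dart_edge_mem_incidenceSet_fst (d : G.Dart) : d.edge ∈ G.incidenceSet d.fst :=
  ⟨d.edge_mem, Sym2.mem_mk_left _ _⟩

lemma dart_eq_of_fst_edge {d d' : G.Dart} (h1 : d.fst = d'.fst) (h2 : d.edge = d'.edge) :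
    d = d' := by
  rcases (dart_edge_eq_iff d d').mp h2 with h | h
  · exact h
  · exfalso
    have hh : d.fst = d'.snd := by rw [h]; rfl
    exact d'.snd_ne_fst (h1 ▸ hh).symm

variable (μ : V → Sym2 V → Sym2 V)
variable (hmem : ∀ v, ∀ e ∈ G.incidenceSet v, μ v e ∈ G.incidenceSet v)

/-- the transition successor on darts -/
noncomputable def next (d : G.Dart) : G.Dart :=
  have h : μ d.snd d.edge ∈ G.incidenceSet d.snd :=
    hmem d.snd d.edge (dart_edge_mem_incidenceSet_snd d)
  ⟨(d.snd, Sym2.Mem.other h.2), by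
    rw [← SimpleGraph.mem_edgeSet]
    have := Sym2.other_spec h.2
    rw [this]
    exact h.1⟩

lemma next_fst (d : G.Dart) : (next μ hmem d).fst = d.snd := rfl

lemma next_edge (d : G.Dart) : (next μ hmem d).edge = μ d.snd d.edge := by
  have h : μ d.snd d.edge ∈ G.incidenceSet d.snd :=
    hmem d.snd d.edge (dart_edge_mem_incidenceSet_snd d)
  exact Sym2.other_spec h.2


lemma darts_getElem_fst {u v : V} (p : G.Walk u v) (i : ℕ) (h : i < p.darts.length) :
    (p.darts[i]'h).fst = p.support[i]'(by
      rw [SimpleGraph.Walk.length_support]; rw [SimpleGraph.Walk.length_darts] at h; omega) := by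
  have := p.map_fst_darts
  calc (p.darts[i]'h).fst = (p.darts.map (·.fst))[i]'(by simpa using h) := by simp
    _ = (p.support.dropLast)[i]'(by rw [this] at *; exact (by simpa using h)) := by
        simp_rw [this]
    _ = _ := List.getElem_dropLast _

lemma darts_getElem_snd {u v : V} (p : G.Walk u v) (i : ℕ) (h : i < p.darts.length) :
    (p.darts[i]'h).snd = p.support[i+1]'(by
      rw [SimpleGraph.Walk.length_support]; rw [SimpleGraph.Walk.length_darts] at h; omega) := by
  have := p.map_snd_darts
  calc (p.darts[i]'h).snd = (p.darts.map (·.snd))[i]'(by simpa using h) := by simp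
    _ = (p.support.tail)[i]'(by rw [this] at *; exact (by simpa using h)) := by
        simp_rw [this]
    _ = _ := by rw [List.getElem_tail]

lemma darts_getElem_edge {u v : V} (p : G.Walk u v) (i : ℕ) (h : i < p.darts.length) :
    (p.darts[i]'h).edge = p.edges[i]'(by
      rw [SimpleGraph.Walk.length_edges]; rw [SimpleGraph.Walk.length_darts] at h; omega) := by
  simp [SimpleGraph.Walk.edges]

lemma support_getElem_zero {u v : V} (p : G.Walk u v) :
    p.support[0]'(by rw [SimpleGraph.Walk.length_support]; omega) = u := by
  have := p.support_eq_cons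
  rw [List.getElem_eq_iff]
  rw [this]
  simp

lemma support_getElem_length {u v : V} (p : G.Walk u v) :
    p.support[p.length]'(by rw [SimpleGraph.Walk.length_support]; omega) = v := by
  have h1 : p.support ≠ [] := p.support_ne_nil
  have := List.getLast_eq_getElem h1
  rw [p.getLast_support] at this
  have e : p.support[p.length]'(by rw [SimpleGraph.Walk.length_support]; omega) =
      p.support[p.support.length - 1]'(by rw [SimpleGraph.Walk.length_support]; omega) := by
    congr 1
    rw [SimpleGraph.Walk.length_support]; omega
  rw [e, ← this]

lemma support_getElem_mod {u : V} (T : G.Walk u u) (i : ℕ) (h : i < T.length) :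
    T.support[(i+1) % T.length]'(by
        rw [SimpleGraph.Walk.length_support]
        exact lt_of_lt_of_le (Nat.mod_lt _ (Nat.zero_lt_of_lt h)) (by omega)) =
      T.support[i+1]'(by rw [SimpleGraph.Walk.length_support]; omega) := by
  rcases lt_or_eq_of_le (Nat.succ_le_of_lt h) with h' | h'
  · congr 1
    exact Nat.mod_eq_of_lt h'
  · have h0 : (i+1) % T.length = 0 := by
      have : i + 1 = T.length := h'
      rw [this]; exact Nat.mod_self _
    have hlen : i + 1 = T.length := h'
    have e1 : T.support[(i+1) % T.length]'(by
        rw [SimpleGraph.Walk.length_support]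
        exact lt_of_lt_of_le (Nat.mod_lt _ (Nat.zero_lt_of_lt h)) (by omega)) =
        T.support[0]'(by rw [SimpleGraph.Walk.length_support]; omega) := by
      congr 1
    have e2 : T.support[i+1]'(by rw [SimpleGraph.Walk.length_support]; omega) =
        T.support[T.length]'(by rw [SimpleGraph.Walk.length_support]; omega) := by
      congr 1
    rw [e1, e2, support_getElem_zero, support_getElem_length]


lemma getElem_congr_idx {α : Type*} (l : List α) {i j : ℕ} (h : i = j) (hi : i < l.length) :
    l[i]'hi = l[j]'(h ▸ hi) := by subst h; rfl

lemma compat_next {u : V} (T : G.Walk u u) (hc : T.TransCompatible μ) (i : ℕ)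
    (h : i < T.darts.length) :
    next μ hmem (T.darts[i]'h) =
      T.darts[(i+1) % T.darts.length]'(Nat.mod_lt _ (Nat.zero_lt_of_lt h)) := by
  have hk : T.darts.length = T.length := T.length_darts
  have he : T.edges.length = T.length := T.length_edges
  have hi' : i < T.edges.length := by omega
  have hcomp := hc i hi'
  simp only [List.get_eq_getElem] at hcomp
  apply dart_eq_of_fst_edge
  · rw [next_fst, darts_getElem_snd, darts_getElem_fst]
    have hmodeq : (i+1) % T.darts.length = (i+1) % T.length := by rw [hk]
    rw [getElem_congr_idx T.support hmodeq, support_getElem_mod T i (by omega)]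
  · rw [next_edge, darts_getElem_snd, darts_getElem_edge, darts_getElem_edge]
    rw [hcomp]
    exact getElem_congr_idx T.edges (by rw [hk, he]) _

lemma compat_prev (hinv : ∀ v, ∀ e ∈ G.incidenceSet v, μ v (μ v e) = e)
    {u : V} (T : G.Walk u u) (hc : T.TransCompatible μ) (i : ℕ)
    (h : i < T.darts.length) :
    next μ hmem ((T.darts[(i+1) % T.darts.length]'(Nat.mod_lt _ (Nat.zero_lt_of_lt h))).symm) =
      (T.darts[i]'h).symm := by
  have hk : T.darts.length = T.length := T.length_darts
  have he : T.edges.length = T.length := T.length_edges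
  have hi' : i < T.edges.length := by omega
  have hcomp := hc i hi'
  simp only [List.get_eq_getElem] at hcomp
  have hjlt : (i+1) % T.darts.length < T.darts.length := Nat.mod_lt _ (Nat.zero_lt_of_lt h)
  have hsupp : (T.darts[(i+1) % T.darts.length]'hjlt).fst =
      T.support[i+1]'(by rw [SimpleGraph.Walk.length_support]; omega) := by
    rw [darts_getElem_fst]
    rw [getElem_congr_idx T.support (show (i+1) % T.darts.length = (i+1) % T.length by rw [hk])]
    exact support_getElem_mod T i (by omega)
  have hincid : (T.edges[i]'hi') ∈
      G.incidenceSet (T.support[i+1]'(by rw [SimpleGraph.Walk.length_support]; omega)) := by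
    rw [← darts_getElem_edge _ _ h, ← darts_getElem_snd _ _ h]
    exact dart_edge_mem_incidenceSet_snd _
  apply dart_eq_of_fst_edge
  · rw [next_fst]
    simp only [SimpleGraph.Dart.symm_toProd, Prod.snd_swap, Prod.fst_swap]
    exact hsupp.trans (darts_getElem_snd T i h).symm
  · rw [next_edge]
    simp only [SimpleGraph.Dart.symm_toProd, Prod.snd_swap, SimpleGraph.Dart.edge_symm]
    rw [hsupp, darts_getElem_edge _ _ hjlt, darts_getElem_edge _ _ h]
    rw [getElem_congr_idx T.edges
      (show (i+1) % T.darts.length = (i+1) % T.edges.length by rw [hk, he])]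
    rw [← hcomp]
    exact hinv _ _ hincid


lemma sync {W : Type*} {f : W → W} {a b : ℕ → W} (ha : ∀ n, f (a n) = a (n+1))
    (hb : ∀ n, f (b n) = b (n+1)) {i j : ℕ} (hij : a i = b j) :
    ∀ t, a (i + t) = b (j + t) := by
  intro t
  induction t with
  | zero => exact hij
  | succ t ih =>
    have := congrArg f ih
    rw [ha, hb] at this
    exact this

end TransAux


open TransAux

open Classical in
/-- Given a transition system on a finite simple graph `G` (a fixed-point-free
involution `μ v` of the edges incident with `v` for each vertex `v`), if `G` admits
a `μ`-compatible Eulerian circuit, then every nonempty `μ`-compatible closed trail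
in `G` uses every edge of `G`. -/
theorem compatible_closed_trail_of_compatible_eulerian {V : Type*} [Fintype V]
    (G : SimpleGraph V) (μ : V → Sym2 V → Sym2 V)
    (hmem : ∀ v, ∀ e ∈ G.incidenceSet v, μ v e ∈ G.incidenceSet v)
    (hinv : ∀ v, ∀ e ∈ G.incidenceSet v, μ v (μ v e) = e)
    (hfp : ∀ v, ∀ e ∈ G.incidenceSet v, μ v e ≠ e)
    (hE : ∃ (u : V) (C : G.Walk u u), C.IsEulerian ∧ C.TransCompatible μ) :
    ∀ (v : V) (W : G.Walk v v), W.IsTrail → W.edges ≠ [] → W.TransCompatible μ →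
      ∀ e ∈ G.edgeSet, e ∈ W.edges := by
  intro v W _hT hne hcomp e he
  obtain ⟨u, C, hCe, hCc⟩ := hE
  have hCmem : ∀ f ∈ G.edgeSet, f ∈ C.edges := by
    intro f hf
    have h1 := hCe f hf
    by_contra hcon
    rw [List.count_eq_zero_of_not_mem hcon] at h1
    omega
  have hkW : 0 < W.darts.length := by
    rw [SimpleGraph.Walk.length_darts, ← SimpleGraph.Walk.length_edges]
    exact List.length_pos_iff.mpr hne
  obtain ⟨⟨ic, hic⟩, hice⟩ := List.mem_iff_get.mp (hCmem e he)
  have hicd : ic < C.darts.length := by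
    rw [SimpleGraph.Walk.length_darts, ← SimpleGraph.Walk.length_edges]; exact hic
  have hkC : 0 < C.darts.length := Nat.zero_lt_of_lt hicd
  have hw0e : (W.darts[0]'hkW).edge ∈ C.edges := hCmem _ (SimpleGraph.Dart.edge_mem _)
  obtain ⟨⟨p, hp⟩, hpe⟩ := List.mem_iff_get.mp hw0e
  have hpd : p < C.darts.length := by
    rw [SimpleGraph.Walk.length_darts, ← SimpleGraph.Walk.length_edges]; exact hp
  have hpedge : (C.darts[p]'hpd).edge = (W.darts[0]'hkW).edge := by
    rw [darts_getElem_edge _ _ hpd]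
    simpa [List.get_eq_getElem] using hpe
  have eedge : (C.darts[ic]'hicd).edge = e := by
    rw [darts_getElem_edge _ _ hicd]
    simpa [List.get_eq_getElem] using hice
  let aC : ℕ → G.Dart := fun n => C.darts[n % C.darts.length]'(Nat.mod_lt _ hkC)
  let aW : ℕ → G.Dart := fun n => W.darts[n % W.darts.length]'(Nat.mod_lt _ hkW)
  let rC : ℕ → G.Dart := fun n =>
    (C.darts[C.darts.length - 1 - n % C.darts.length]'(by
      have := Nat.mod_lt n hkC; omega)).symm
  have haC : ∀ n, next μ hmem (aC n) = aC (n+1) := by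
    intro n
    have h1 := compat_next μ hmem C hCc (n % C.darts.length) (Nat.mod_lt _ hkC)
    have h2 : (n % C.darts.length + 1) % C.darts.length = (n+1) % C.darts.length :=
      Nat.mod_add_mod n C.darts.length 1
    exact h1.trans (getElem_congr_idx _ h2 _)
  have haW : ∀ n, next μ hmem (aW n) = aW (n+1) := by
    intro n
    have h1 := compat_next μ hmem W hcomp (n % W.darts.length) (Nat.mod_lt _ hkW)
    have h2 : (n % W.darts.length + 1) % W.darts.length = (n+1) % W.darts.length :=
      Nat.mod_add_mod n W.darts.length 1
    exact h1.trans (getElem_congr_idx _ h2 _)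
  have hrC : ∀ n, next μ hmem (rC n) = rC (n+1) := by
    intro n
    have hr : n % C.darts.length < C.darts.length := Nat.mod_lt _ hkC
    have hi : C.darts.length - 1 - (n+1) % C.darts.length < C.darts.length := by omega
    have hkey : (C.darts.length - 1 - (n+1) % C.darts.length + 1) % C.darts.length =
        C.darts.length - 1 - n % C.darts.length := by
      rcases Nat.lt_or_ge (n % C.darts.length + 1) C.darts.length with hca | hca
      · have h1 : (n+1) % C.darts.length = n % C.darts.length + 1 := by
          rw [← Nat.mod_add_mod]; exact Nat.mod_eq_of_lt hca
        rw [h1]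
        have h2 : C.darts.length - 1 - (n % C.darts.length + 1) + 1 =
            C.darts.length - 1 - n % C.darts.length := by omega
        rw [h2]; exact Nat.mod_eq_of_lt (by omega)
      · have hca' : n % C.darts.length + 1 = C.darts.length := by omega
        have h1 : (n+1) % C.darts.length = 0 := by
          rw [← Nat.mod_add_mod, hca']; exact Nat.mod_self _
        rw [h1]
        have h2 : C.darts.length - 1 - 0 + 1 = C.darts.length := by omega
        rw [h2, Nat.mod_self]
        omega
    have h1 := compat_prev μ hmem hinv C hCc (C.darts.length - 1 - (n+1) % C.darts.length) hi
    have e1 : rC n = (C.darts[(C.darts.length - 1 - (n+1) % C.darts.length + 1) %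
        C.darts.length]'(Nat.mod_lt _ hkC)).symm :=
      congrArg SimpleGraph.Dart.symm (getElem_congr_idx _ hkey.symm _)
    rw [e1]
    exact h1
  have hbase0 : aW 0 = W.darts[0]'hkW := getElem_congr_idx _ (Nat.zero_mod _) _
  rcases (SimpleGraph.dart_edge_eq_iff (W.darts[0]'hkW) (C.darts[p]'hpd)).mp hpedge.symm
    with hcase | hcase
  · -- w0 = c_p : follow forward cycle
    have hbase : aC p = aW 0 := by
      rw [hbase0, hcase]
      exact getElem_congr_idx _ (Nat.mod_eq_of_lt hpd) _
    set t := C.darts.length - p + ic with ht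
    have m1 : (p + t) % C.darts.length = ic := by
      have h2 : p + t = C.darts.length + ic := by omega
      rw [h2, Nat.add_mod_left]
      exact Nat.mod_eq_of_lt hicd
    have hsy := sync haC haW hbase t
    have E : C.darts[ic]'hicd = W.darts[(0 + t) % W.darts.length]'(Nat.mod_lt _ hkW) :=
      (getElem_congr_idx _ m1.symm _).trans hsy
    rw [← eedge, E, darts_getElem_edge]
    exact List.getElem_mem _
  · -- w0 = c_p.symm : follow reverse cycle
    have hbase : rC (C.darts.length - 1 - p) = aW 0 := by
      rw [hbase0, hcase]
      apply congrArg SimpleGraph.Dart.symm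
      apply TransAux.getElem_congr_idx
      have : (C.darts.length - 1 - p) % C.darts.length = C.darts.length - 1 - p :=
        Nat.mod_eq_of_lt (by omega)
      omega
    set t := p + (C.darts.length - ic) with ht
    have m2 : C.darts.length - 1 - ((C.darts.length - 1 - p) + t) % C.darts.length = ic := by
      have h2 : (C.darts.length - 1 - p) + t =
          C.darts.length + (C.darts.length - 1 - ic) := by omega
      rw [h2, Nat.add_mod_left, Nat.mod_eq_of_lt (by omega : C.darts.length - 1 - ic <
        C.darts.length)]
      omega
    have hsy := sync hrC haW hbase t
    have E : (C.darts[ic]'hicd).symm =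
        W.darts[(0 + t) % W.darts.length]'(Nat.mod_lt _ hkW) := by
      refine Eq.trans ?_ hsy
      exact congrArg SimpleGraph.Dart.symm (getElem_congr_idx _ m2.symm _)
    rw [← eedge, ← SimpleGraph.Dart.edge_symm, E, darts_getElem_edge]
    exact List.getElem_mem _
end
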